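/- arXiv:1509.03316 — 5 statements merged into one kernel-verified Lean document; each statement's English description precedes it below -/
import Mathlib

section
/- Assume g_i ≥ 2 for every 1 ≤ i ≤ G. Viewing Mat_{n_1⋯n_G}(k[ζ]) inside Mat_{n_1⋯n_G}(k(ζ)), where k(ζ) is the field of fractions of k[ζ], the k(ζ)-linear span of the algebra of multipartite generic matrices GM_{n_1,…,n_G}(x) is all of Mat_{n_1⋯n_G}(k(ζ)); in other words, Mat_{n_1⋯n_G}(k(ζ)) is a central extension of GM_{n_1,…,n_G}(x). -/
/-- `tau n i A = I ⊗ ⋯ ⊗ A ⊗ ⋯ ⊗ I`, the Kronecker product with `A` in the `i`-th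
slot and identity matrices elsewhere, realized on the index set `∀ j, Fin (n j)`. -/
def tau {R : Type*} [CommRing R] {ι : Type*} [Fintype ι] [DecidableEq ι]
    (n : ι → ℕ) (i : ι) (A : Matrix (Fin (n i)) (Fin (n i)) R) :
    Matrix (∀ j, Fin (n j)) (∀ j, Fin (n j)) R :=
  Matrix.of fun α β =>
    A (α i) (β i) * ∏ j ∈ Finset.univ.erase i, (if α j = β j then (1 : R) else 0)

/-- The indexing set for the commuting indeterminates `ζ^(i)_{jαβ}`. -/
abbrev ZetaIdx {G : ℕ} (g n : Fin G → ℕ) : Type :=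
  Σ i : Fin G, Fin (g i) × Fin (n i) × Fin (n i)

/-- The generic matrix `x^(i)_j`, with `(α,β)` entry the indeterminate `ζ^(i)_{jαβ}`. -/
noncomputable def genMat (k : Type*) [Field k] {G : ℕ} (g n : Fin G → ℕ) (i : Fin G) (j : Fin (g i)) :
    Matrix (Fin (n i)) (Fin (n i)) (MvPolynomial (ZetaIdx g n) k) :=
  Matrix.of fun α β => MvPolynomial.X ⟨i, (j, α, β)⟩

/-- The algebra of multipartite generic matrices `GM_{n_1,…,n_G}(x)`: the unital
`k`-subalgebra of `Mat_{n_1⋯n_G}(k[ζ])` generated by the multipartite generic matrices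
`τ_i(x^(i)_j)`. -/
noncomputable def GM (k : Type*) [Field k] {G : ℕ} (g n : Fin G → ℕ) :
    Subalgebra k (Matrix (∀ j, Fin (n j)) (∀ j, Fin (n j)) (MvPolynomial (ZetaIdx g n) k)) :=
  Algebra.adjoin k {M | ∃ (i : Fin G) (j : Fin (g i)), M = tau n i (genMat k g n i j)}

section AuxiliaryLemmas

set_option linter.unusedSectionVars false
set_option maxHeartbeats 1600000

namespace TauAux

variable {R : Type*} [CommRing R] {ι : Type*} [Fintype ι] [DecidableEq ι] (n : ι → ℕ)

lemma one_apply_eq_prod (α β : ∀ j, Fin (n j)) :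
    (1 : Matrix (∀ j, Fin (n j)) (∀ j, Fin (n j)) R) α β
      = ∏ j, (if α j = β j then (1 : R) else 0) := by
  rw [Finset.prod_boole, Matrix.one_apply]
  simp [funext_iff]

lemma tau_one (i : ι) : tau n i (1 : Matrix (Fin (n i)) (Fin (n i)) R) = 1 := by
  ext α β
  rw [one_apply_eq_prod, tau]
  simp only [Matrix.of_apply, Matrix.one_apply]
  rw [← Finset.prod_erase_mul _ _ (Finset.mem_univ i)]
  ring

lemma sum_collapse (i : ι) (α : ∀ j, Fin (n j)) (f : (∀ j, Fin (n j)) → R) :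
    ∑ γ : ∀ j, Fin (n j),
        (∏ j ∈ Finset.univ.erase i, (if α j = γ j then (1 : R) else 0)) * f γ
      = ∑ c : Fin (n i), f (Function.update α i c) := by
  classical
  have key : ∀ γ : ∀ j, Fin (n j),
      (∏ j ∈ Finset.univ.erase i, (if α j = γ j then (1 : R) else 0))
        = if Function.update α i (γ i) = γ then 1 else 0 := by
    intro γ
    rw [Finset.prod_boole]
    congr 1
    simp only [eq_iff_iff]
    constructor
    · intro h; funext j
      by_cases hj : j = i
      · subst hj; simp
      · rw [Function.update_of_ne hj]
        exact h j (Finset.mem_erase.2 ⟨hj, Finset.mem_univ j⟩)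
    · intro h j hj
      have := congrFun h j
      rwa [Function.update_of_ne (Finset.mem_erase.1 hj).1] at this
  simp_rw [key, ite_mul, one_mul, zero_mul]
  rw [← Finset.sum_filter]
  have himg : Finset.univ.filter (fun γ : ∀ j, Fin (n j) => Function.update α i (γ i) = γ)
      = Finset.univ.image (fun c : Fin (n i) => Function.update α i c) := by
    ext γ
    simp only [Finset.mem_filter, Finset.mem_univ, true_and, Finset.mem_image]
    constructor
    · intro h; exact ⟨γ i, h⟩
    · rintro ⟨c, rfl⟩
      simp
  rw [himg, Finset.sum_image]
  intro x _ y _ h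
  have := congrFun h i
  simpa using this

lemma tau_mul (i : ι) (A B : Matrix (Fin (n i)) (Fin (n i)) R) :
    tau n i (A * B) = tau n i A * tau n i B := by
  ext α β
  rw [Matrix.mul_apply]
  have h1 : ∀ γ : ∀ j, Fin (n j), tau n i A α γ * tau n i B γ β
      = (∏ j ∈ Finset.univ.erase i, (if α j = γ j then (1 : R) else 0))
        * (A (α i) (γ i) * tau n i B γ β) := by
    intro γ; simp only [tau, Matrix.of_apply]; ring
  simp_rw [h1]
  rw [sum_collapse]
  have h2 : ∀ c : Fin (n i), A (α i) ((Function.update α i c) i)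
        * tau n i B (Function.update α i c) β
      = A (α i) c * B c (β i)
        * ∏ j ∈ Finset.univ.erase i, (if α j = β j then (1 : R) else 0) := by
    intro c
    simp only [tau, Matrix.of_apply, Function.update_self]
    rw [Finset.prod_congr rfl (fun j hj => by
      rw [Function.update_of_ne (Finset.mem_erase.1 hj).1])]
    ring
  simp_rw [Function.update_self] at h2 ⊢
  rw [Finset.sum_congr rfl (fun c _ => h2 c)]
  rw [tau, Matrix.of_apply, Matrix.mul_apply, Finset.sum_mul]

/-- `tau` as a `k`-algebra homomorphism. -/
def tauAlgHom (k : Type*) [CommSemiring k] [Algebra k R] (i : ι) :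
    Matrix (Fin (n i)) (Fin (n i)) R →ₐ[k] Matrix (∀ j, Fin (n j)) (∀ j, Fin (n j)) R where
  toFun := tau n i
  map_one' := tau_one n i
  map_mul' := tau_mul n i
  map_zero' := by ext; simp [tau]
  map_add' := by intro A B; ext; simp [tau, add_mul]
  commutes' := by
    intro c
    show tau n i (algebraMap k _ c) = algebraMap k _ c
    have hsmul : ∀ (A : Matrix (Fin (n i)) (Fin (n i)) R), tau n i (c • A) = c • tau n i A := by
      intro A; ext α β
      simp [tau, Matrix.smul_apply, smul_mul_assoc]
    rw [Algebra.algebraMap_eq_smul_one, Algebra.algebraMap_eq_smul_one, hsmul, tau_one]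

lemma tauAlgHom_apply (k : Type*) [CommSemiring k] [Algebra k R] (i : ι)
    (A : Matrix (Fin (n i)) (Fin (n i)) R) : tauAlgHom n k i A = tau n i A := rfl

lemma tau_mul_tau_apply {i j : ι} (hij : i ≠ j)
    (A : Matrix (Fin (n i)) (Fin (n i)) R) (B : Matrix (Fin (n j)) (Fin (n j)) R)
    (α β : ∀ l, Fin (n l)) :
    (tau n i A * tau n j B) α β
      = A (α i) (β i) * B (α j) (β j)
        * ∏ l ∈ (Finset.univ.erase i).erase j, (if α l = β l then (1 : R) else 0) := by
  classical
  rw [Matrix.mul_apply]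
  have h1 : ∀ γ : ∀ l, Fin (n l), tau n i A α γ * tau n j B γ β
      = (∏ l ∈ Finset.univ.erase i, (if α l = γ l then (1 : R) else 0))
        * (A (α i) (γ i) * tau n j B γ β) := by
    intro γ; simp only [tau, Matrix.of_apply]; ring
  simp_rw [h1, sum_collapse]
  have h2 : ∀ c : Fin (n i),
      A (α i) ((Function.update α i c) i) * tau n j B (Function.update α i c) β
        = (if c = β i then (1:R) else 0) *
            (A (α i) c * B (α j) (β j)
              * ∏ l ∈ (Finset.univ.erase i).erase j, (if α l = β l then (1 : R) else 0)) := by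
    intro c
    rw [Function.update_self]
    simp only [tau, Matrix.of_apply]
    rw [Function.update_of_ne (Ne.symm hij)]
    have : ∏ l ∈ Finset.univ.erase j, (if Function.update α i c l = β l then (1 : R) else 0)
        = (if c = β i then (1:R) else 0)
          * ∏ l ∈ (Finset.univ.erase j).erase i, (if α l = β l then (1 : R) else 0) := by
      rw [← Finset.mul_prod_erase _ _ (Finset.mem_erase.2 ⟨hij, Finset.mem_univ i⟩)]
      rw [Function.update_self]
      congr 1
      refine Finset.prod_congr rfl (fun l hl => ?_)
      rw [Function.update_of_ne (Finset.mem_erase.1 hl).1]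
    rw [this, Finset.erase_right_comm]
    ring
  rw [Finset.sum_congr rfl (fun c _ => h2 c)]
  simp [Finset.sum_ite_eq', Finset.mem_univ]

lemma tau_commute {i j : ι} (hij : i ≠ j)
    (A : Matrix (Fin (n i)) (Fin (n i)) R) (B : Matrix (Fin (n j)) (Fin (n j)) R) :
    Commute (tau n i A) (tau n j B) := by
  unfold Commute SemiconjBy
  ext α β
  rw [tau_mul_tau_apply n hij, tau_mul_tau_apply n hij.symm, Finset.erase_right_comm]
  ring

lemma noncommProd_tau (s : Finset ι) (M : ∀ i, Matrix (Fin (n i)) (Fin (n i)) R) (comm) :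
    s.noncommProd (fun i => tau n i (M i)) comm
      = Matrix.of fun α β => (∏ i ∈ s, M i (α i) (β i))
          * ∏ j ∈ sᶜ, (if α j = β j then (1 : R) else 0) := by
  classical
  induction s using Finset.induction_on with
  | empty =>
      rw [Finset.noncommProd_empty]
      ext α β
      rw [Matrix.of_apply, Finset.prod_empty, one_mul, Finset.compl_empty]
      rw [Finset.prod_boole, Matrix.one_apply]
      simp [funext_iff]
  | @insert a s ha ih =>
      rw [Finset.noncommProd_insert_of_notMem _ _ _ _ ha, ih]
      ext α β
      rw [Matrix.mul_apply]
      have h1 : ∀ γ : ∀ l, Fin (n l),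
          tau n a (M a) α γ *
            (Matrix.of fun α β => (∏ i ∈ s, M i (α i) (β i))
              * ∏ j ∈ sᶜ, (if α j = β j then (1 : R) else 0)) γ β
          = (∏ l ∈ Finset.univ.erase a, (if α l = γ l then (1 : R) else 0))
            * (M a (α a) (γ a) *
              ((∏ i ∈ s, M i (γ i) (β i)) * ∏ j ∈ sᶜ, (if γ j = β j then (1 : R) else 0))) := by
        intro γ; simp only [tau, Matrix.of_apply]; ring
      simp_rw [h1, sum_collapse]
      have h2 : ∀ c : Fin (n a),
          M a (α a) ((Function.update α a c) a) *
            ((∏ i ∈ s, M i ((Function.update α a c) i) (β i))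
              * ∏ j ∈ sᶜ, (if Function.update α a c j = β j then (1 : R) else 0))
          = (if c = β a then (1:R) else 0) *
            (M a (α a) c * ((∏ i ∈ s, M i (α i) (β i))
              * ∏ j ∈ (insert a s)ᶜ, (if α j = β j then (1 : R) else 0))) := by
        intro c
        rw [Function.update_self]
        have e1 : ∏ i ∈ s, M i ((Function.update α a c) i) (β i)
            = ∏ i ∈ s, M i (α i) (β i) :=
          Finset.prod_congr rfl (fun i hi => by
            rw [Function.update_of_ne (by rintro rfl; exact ha hi)])
        have e2 : ∏ j ∈ sᶜ, (if Function.update α a c j = β j then (1 : R) else 0)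
            = (if c = β a then (1:R) else 0)
              * ∏ j ∈ sᶜ.erase a, (if α j = β j then (1 : R) else 0) := by
          rw [← Finset.mul_prod_erase _ _ (Finset.mem_compl.2 ha), Function.update_self]
          congr 1
          exact Finset.prod_congr rfl (fun l hl => by
            rw [Function.update_of_ne (Finset.mem_erase.1 hl).1])
        rw [e1, e2, Finset.compl_insert]
        ring
      rw [Finset.sum_congr rfl (fun c _ => h2 c)]
      rw [Matrix.of_apply, Finset.prod_insert ha]
      simp [Finset.sum_ite_eq', Finset.mem_univ]
      ring

lemma tau_map {S : Type*} [CommRing S] (f : R →+* S) (i : ι)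
    (A : Matrix (Fin (n i)) (Fin (n i)) R) :
    (tau n i A).map f = tau n i (A.map f) := by
  ext α β
  simp only [tau, Matrix.map_apply, Matrix.of_apply, map_mul, map_prod, apply_ite f,
    map_one, map_zero]

end TauAux


noncomputable section SingleFactor

variable (k : Type*) [Field k]

open Fin.NatCast Fin.CommRing

/-- The diagonal matrix `diag(0,1,…,m-1)`. -/
def dM (m : ℕ) : Matrix (Fin m) (Fin m) k := Matrix.diagonal fun a => (a : k)

/-- The cyclic shift matrix. -/
def cM (m : ℕ) : Matrix (Fin m) (Fin m) k :=
  Matrix.of fun α β => if (α : ℕ) = ((β : ℕ) + 1) % m then 1 else 0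

lemma cM_apply (m : ℕ) [NeZero m] (α β : Fin m) :
    cM k m α β = if α = β + 1 then 1 else 0 := by
  have hβ : (β : ℕ) < m := β.isLt
  have hm : 0 < m := Nat.pos_of_ne_zero (NeZero.ne m)
  have hmod : ((β : ℕ) + 1 % m) % m = ((β : ℕ) + 1) % m := by
    conv_rhs => rw [Nat.add_mod]
    conv_lhs => rw [Nat.add_mod]
    rw [Nat.mod_mod_of_dvd 1 (dvd_refl m)]
  have h : ((α : ℕ) = ((β : ℕ) + 1) % m) ↔ α = β + 1 := by
    rw [Fin.ext_iff, Fin.val_add, Fin.val_one', hmod]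
  simp only [cM, Matrix.of_apply, h]

lemma cM_pow (m : ℕ) [NeZero m] (t : ℕ) :
    cM k m ^ t = Matrix.of fun α β => if α = β + (t : Fin m) then 1 else 0 := by
  induction t with
  | zero =>
      ext α β
      simp [Matrix.one_apply, eq_comm]
  | succ t ih =>
      rw [pow_succ, ih]
      ext α β
      rw [Matrix.mul_apply]
      have h : ∀ γ : Fin m,
          (Matrix.of fun α β => if α = β + (t : Fin m) then (1:k) else 0) α γ * cM k m γ β
          = if γ = β + 1 then (if α = γ + (t : Fin m) then (1:k) else 0) else 0 := by
        intro γ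
        rw [cM_apply]
        split <;> simp
      simp_rw [h]
      rw [Finset.sum_ite_eq' Finset.univ (β + 1)]
      simp only [Finset.mem_univ, if_true, Matrix.of_apply]
      congr 1
      rw [show ((t + 1 : ℕ) : Fin m) = (t : Fin m) + 1 by push_cast; ring]
      rw [eq_iff_iff]
      constructor <;> intro h' <;> [skip; skip] <;> rw [h'] <;> ring

lemma stdBasis_diag_mem (m : ℕ) [NeZero m] [CharZero k] (a : Fin m) :
    Matrix.single a a 1 ∈ Algebra.adjoin k {dM k m, cM k m} := by
  classical
  have hinj : Set.InjOn (fun x : Fin m => ((x : ℕ) : k)) ↑(Finset.univ : Finset (Fin m)) := by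
    intro x _ y _ h
    exact Fin.ext (Nat.cast_injective h)
  have hmem : (Polynomial.aeval (dM k m))
      (Lagrange.basis Finset.univ (fun x : Fin m => ((x : ℕ) : k)) a)
      ∈ Algebra.adjoin k {dM k m, cM k m} := by
    refine Algebra.adjoin_mono ?_ (Polynomial.aeval_mem_adjoin_singleton k (dM k m))
    simp
  have h2 : Polynomial.aeval (fun x : Fin m => ((x : ℕ) : k))
        (Lagrange.basis Finset.univ (fun x : Fin m => ((x : ℕ) : k)) a)
      = fun b : Fin m => Polynomial.eval ((b : ℕ) : k)
          (Lagrange.basis Finset.univ (fun x : Fin m => ((x : ℕ) : k)) a) := by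
    funext b
    have := Polynomial.aeval_algHom_apply (Pi.evalAlgHom k (fun _ : Fin m => k) b)
      (fun x : Fin m => ((x : ℕ) : k))
      (Lagrange.basis Finset.univ (fun x : Fin m => ((x : ℕ) : k)) a)
    simp only [Pi.evalAlgHom_apply] at this
    rw [← this]
    exact congrFun (Polynomial.coe_aeval_eq_eval _) _
  have hdiag : (Polynomial.aeval (dM k m))
      (Lagrange.basis Finset.univ (fun x : Fin m => ((x : ℕ) : k)) a)
      = Matrix.diagonal (fun b : Fin m => Polynomial.eval ((b : ℕ) : k)
          (Lagrange.basis Finset.univ (fun x : Fin m => ((x : ℕ) : k)) a)) := by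
    rw [← h2, dM]
    exact Polynomial.aeval_algHom_apply (Matrix.diagonalAlgHom k)
      (fun x : Fin m => ((x : ℕ) : k)) _
  have heval : (Polynomial.aeval (dM k m))
      (Lagrange.basis Finset.univ (fun x : Fin m => ((x : ℕ) : k)) a)
      = Matrix.single a a 1 := by
    rw [hdiag]
    ext i j
    simp only [Matrix.diagonal_apply, Matrix.single, Matrix.of_apply]
    by_cases hij : i = j
    · subst hij
      rw [if_pos rfl]
      by_cases hia : i = a
      · subst hia
        rw [if_pos ⟨rfl, rfl⟩]
        have hs := Lagrange.eval_basis_self hinj (Finset.mem_univ i)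
        simpa using hs
      · rw [if_neg (by tauto)]
        have hs := Lagrange.eval_basis_of_ne (v := fun x : Fin m => ((x : ℕ) : k))
          (fun h => hia h.symm) (Finset.mem_univ i)
        simpa using hs
    · rw [if_neg hij, if_neg (by rintro ⟨rfl, rfl⟩; exact hij rfl)]
  rw [← heval]; exact hmem

lemma stdBasis_mem (m : ℕ) [NeZero m] [CharZero k] (a b : Fin m) :
    Matrix.single a b 1 ∈ Algebra.adjoin k {dM k m, cM k m} := by
  classical
  set t : ℕ := ((a - b : Fin m) : ℕ) with ht
  have hab : (cM k m ^ t) a b = 1 := by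
    rw [cM_pow]
    simp only [Matrix.of_apply, ht, Fin.cast_val_eq_self]
    rw [if_pos (by ring)]
  have key : Matrix.single a b 1
      = Matrix.single a a 1 * (cM k m ^ t) * Matrix.single b b 1 := by
    ext i j
    by_cases hj : j = b
    · subst hj
      by_cases hi : i = a
      · subst hi
        rw [Matrix.mul_single_apply_same,
          Matrix.single_mul_apply_same, hab,
          Matrix.single_apply_same]
        simp
      · rw [Matrix.mul_single_apply_same,
          Matrix.single_mul_apply_of_ne _ _ _ _ _ hi,
          Matrix.single_apply_of_ne]
        · simp
        · tauto
    · rw [Matrix.mul_single_apply_of_ne _ _ _ _ _ hj,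
        Matrix.single_apply_of_ne]
      tauto
  rw [key]
  have hc : cM k m ∈ Algebra.adjoin k {dM k m, cM k m} :=
    Algebra.subset_adjoin (by simp)
  exact mul_mem (mul_mem (stdBasis_diag_mem k m a) (pow_mem hc t)) (stdBasis_diag_mem k m b)

end SingleFactor


end AuxiliaryLemmas

set_option maxHeartbeats 1600000 in
/-- from the proof of Lemma 2.2. Assume `g_i ≥ 2` for all `i`. Viewing
`Mat_{n_1⋯n_G}(k[ζ])` inside `Mat_{n_1⋯n_G}(k(ζ))`, the `k(ζ)`-linear span of the algebra
of multipartite generic matrices is all of `Mat_{n_1⋯n_G}(k(ζ))`; i.e. `Mat_{n_1⋯n_G}(k(ζ))`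
is a central extension of `GM_{n_1,…,n_G}(x)`. -/
theorem GM_spans_matrix_algebra {k : Type*} [Field k] [CharZero k] {G : ℕ}
    (g n : Fin G → ℕ) (hg : ∀ i, 2 ≤ g i) :
    Submodule.span (FractionRing (MvPolynomial (ZetaIdx g n) k))
      ((fun M : Matrix (∀ j, Fin (n j)) (∀ j, Fin (n j)) (MvPolynomial (ZetaIdx g n) k) =>
          M.map (algebraMap (MvPolynomial (ZetaIdx g n) k)
            (FractionRing (MvPolynomial (ZetaIdx g n) k)))) ''
        (GM k g n : Set (Matrix (∀ j, Fin (n j)) (∀ j, Fin (n j))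
          (MvPolynomial (ZetaIdx g n) k)))) = ⊤ := by
  classical
  by_cases hn : ∀ i, 0 < n i
  swap
  · -- degenerate case: some n i = 0
    push_neg at hn
    obtain ⟨i0, hi0⟩ := hn
    haveI : IsEmpty (∀ j, Fin (n j)) :=
      ⟨fun α => absurd (α i0).isLt (by omega)⟩
    rw [eq_top_iff]
    intro x _
    have hx : x = 0 := by
      funext α
      exact isEmptyElim α
    rw [hx]
    exact Submodule.zero_mem _
  · set R := MvPolynomial (ZetaIdx g n) k with hR
    set K := FractionRing R with hK
    -- evaluation point: x₀ ↦ dM, x₁ ↦ cM, rest ↦ 0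
    set pt : ZetaIdx g n → k := fun z =>
      if (z.2.1 : ℕ) = 0 then dM k (n z.1) z.2.2.1 z.2.2.2
      else if (z.2.1 : ℕ) = 1 then cM k (n z.1) z.2.2.1 z.2.2.2 else 0 with hpt
    set ev : R →ₐ[k] k := MvPolynomial.aeval pt with hev
    have hj0 : ∀ i : Fin G, (0 : ℕ) < g i := fun i => by have := hg i; omega
    have hj1 : ∀ i : Fin G, (1 : ℕ) < g i := fun i => by have := hg i; omega
    have hev0 : ∀ i : Fin G, (genMat k g n i ⟨0, hj0 i⟩).map ev = dM k (n i) := by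
      intro i; ext a b
      rw [Matrix.map_apply]
      have h1 : genMat k g n i ⟨0, hj0 i⟩ a b
          = (MvPolynomial.X ⟨i, (⟨0, hj0 i⟩, a, b)⟩ : R) := rfl
      rw [h1, hev, MvPolynomial.aeval_X, hpt]
      simp
    have hev1 : ∀ i : Fin G, (genMat k g n i ⟨1, hj1 i⟩).map ev = cM k (n i) := by
      intro i; ext a b
      rw [Matrix.map_apply]
      have h1 : genMat k g n i ⟨1, hj1 i⟩ a b
          = (MvPolynomial.X ⟨i, (⟨1, hj1 i⟩, a, b)⟩ : R) := rfl
      rw [h1, hev, MvPolynomial.aeval_X, hpt]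
      simp
    -- preimages of matrix units in each slot
    have hpre : ∀ (i : Fin G) (a b : Fin (n i)), ∃ u : Matrix (Fin (n i)) (Fin (n i)) R,
        u ∈ Algebra.adjoin k {genMat k g n i ⟨0, hj0 i⟩, genMat k g n i ⟨1, hj1 i⟩} ∧
          u.map ev = Matrix.single a b 1 := by
      intro i a b
      haveI : NeZero (n i) := ⟨(hn i).ne'⟩
      have h1 : Matrix.single a b (1 : k)
          ∈ Algebra.adjoin k {dM k (n i), cM k (n i)} := stdBasis_mem k (n i) a b
      have h2 : Algebra.adjoin k {dM k (n i), cM k (n i)}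
          = (Algebra.adjoin k
              {genMat k g n i ⟨0, hj0 i⟩, genMat k g n i ⟨1, hj1 i⟩}).map
            (AlgHom.mapMatrix ev) := by
        rw [AlgHom.map_adjoin, Set.image_pair]
        congr 2
        · rw [AlgHom.mapMatrix_apply, hev0]
        · rw [AlgHom.mapMatrix_apply, hev1]
      rw [h2] at h1
      obtain ⟨u, hu, hu2⟩ := h1
      exact ⟨u, hu, by rw [← AlgHom.mapMatrix_apply]; exact hu2⟩
    choose u hu1 hu2 using hpre
    -- the commuting family and words
    have hcomm : ∀ (f : ∀ i : Fin G, Matrix (Fin (n i)) (Fin (n i)) R),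
        ((Finset.univ : Finset (Fin G)) : Set (Fin G)).Pairwise
          fun i j => Commute (tau n i (f i)) (tau n j (f j)) :=
      fun f i _ j _ hij => TauAux.tau_commute n hij _ _
    set w : ((∀ j, Fin (n j)) × (∀ j, Fin (n j))) →
        Matrix (∀ j, Fin (n j)) (∀ j, Fin (n j)) R :=
      fun p => Finset.univ.noncommProd (fun i => tau n i (u i (p.1 i) (p.2 i)))
        (hcomm _) with hw
    have hwGM : ∀ p, w p ∈ GM k g n := by
      intro p
      apply Submonoid.noncommProd_mem
      intro i _
      have h3 : tau n i (u i (p.1 i) (p.2 i))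
          ∈ (Algebra.adjoin k
              {genMat k g n i ⟨0, hj0 i⟩, genMat k g n i ⟨1, hj1 i⟩}).map
            (TauAux.tauAlgHom n k i) :=
        ⟨_, hu1 i (p.1 i) (p.2 i), TauAux.tauAlgHom_apply n k i _⟩
      rw [AlgHom.map_adjoin] at h3
      refine Algebra.adjoin_mono ?_ h3
      rintro x ⟨y, hy, rfl⟩
      rcases hy with rfl | rfl
      · exact ⟨i, ⟨0, hj0 i⟩, (TauAux.tauAlgHom_apply n k i _)⟩
      · exact ⟨i, ⟨1, hj1 i⟩, (TauAux.tauAlgHom_apply n k i _)⟩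
    have hcommk : ∀ (f : ∀ i : Fin G, Matrix (Fin (n i)) (Fin (n i)) k),
        ((Finset.univ : Finset (Fin G)) : Set (Fin G)).Pairwise
          fun i j => Commute (tau n i (f i)) (tau n j (f j)) :=
      fun f i _ j _ hij => TauAux.tau_commute n hij _ _
    have hwev : ∀ p, (w p).map ev = Matrix.single p.1 p.2 1 := by
      intro p
      have hmap := Finset.map_noncommProd (Finset.univ)
        (fun i => tau n i (u i (p.1 i) (p.2 i))) (hcomm _) (AlgHom.mapMatrix ev)
      simp only [AlgHom.mapMatrix_apply] at hmap
      have hfac : ∀ i : Fin G, (tau n i (u i (p.1 i) (p.2 i))).map ev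
          = tau n i (Matrix.single (p.1 i) (p.2 i) (1 : k)) := by
        intro i
        have h := TauAux.tau_map n (ev : R →+* k) i (u i (p.1 i) (p.2 i))
        have h' : (tau n i (u i (p.1 i) (p.2 i))).map ⇑ev
            = tau n i ((u i (p.1 i) (p.2 i)).map ⇑ev) := h
        rw [h', hu2]
      calc (w p).map ev
          = Finset.univ.noncommProd
              (fun i => (tau n i (u i (p.1 i) (p.2 i))).map ev) _ := hmap
        _ = Finset.univ.noncommProd
              (fun i => tau n i (Matrix.single (p.1 i) (p.2 i) (1 : k)))
              (hcommk _) := Finset.noncommProd_congr rfl (fun i _ => hfac i) _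
        _ = Matrix.single p.1 p.2 1 := by
            rw [TauAux.noncommProd_tau]
            ext α β
            rw [Matrix.of_apply, Finset.compl_univ, Finset.prod_empty, mul_one]
            have hsb : ∀ i : Fin G,
                Matrix.single (p.1 i) (p.2 i) (1 : k) (α i) (β i)
                  = if p.1 i = α i ∧ p.2 i = β i then 1 else 0 := fun i => rfl
            simp_rw [hsb]
            rw [show (Matrix.single p.1 p.2 (1 : k)) α β
                = if p.1 = α ∧ p.2 = β then 1 else 0 from rfl]
            have hcond : (∀ i ∈ (Finset.univ : Finset (Fin G)),
                p.1 i = α i ∧ p.2 i = β i) ↔ (p.1 = α ∧ p.2 = β) := by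
              simp [funext_iff, forall_and]
            rw [Finset.prod_boole]
            simp only [hcond]
    -- the big matrix of word entries
    set Φmat : Matrix ((∀ j, Fin (n j)) × (∀ j, Fin (n j)))
        ((∀ j, Fin (n j)) × (∀ j, Fin (n j))) R :=
      Matrix.of fun q p => (w p) q.1 q.2 with hPhi
    have hPhiev : Φmat.map ev = 1 := by
      ext q p
      rw [Matrix.map_apply, hPhi, Matrix.of_apply]
      have h4 : ev ((w p) q.1 q.2) = ((w p).map ev) q.1 q.2 := rfl
      rw [h4, hwev p, Matrix.one_apply]
      rw [show (Matrix.single p.1 p.2 (1 : k)) q.1 q.2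
          = if p.1 = q.1 ∧ p.2 = q.2 then 1 else 0 from rfl]
      by_cases h : q = p
      · subst h; simp
      · rw [if_neg h, if_neg (fun hc => h (Prod.ext hc.1.symm hc.2.symm))]
    have hdet : Φmat.det ≠ 0 := by
      intro h0
      have h1 : (Φmat.map ⇑ev).det = 1 := by rw [hPhiev, Matrix.det_one]
      have h2 : (ev : R →+* k) Φmat.det = (Φmat.map (ev : R →+* k)).det :=
        RingHom.map_det _ _
      have h3 : (ev : R →+* k) Φmat.det = 1 := by rw [h2]; exact h1
      rw [h0, map_zero] at h3
      exact zero_ne_one h3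
    have hdetK : ((Φmat.map (algebraMap R K)).det) ≠ 0 := by
      have h2 : (algebraMap R K) Φmat.det = (Φmat.map (algebraMap R K)).det :=
        RingHom.map_det _ _
      rw [← h2]
      intro h0
      exact hdet (IsFractionRing.injective R K (by rw [h0, map_zero]))
    have hunit : IsUnit (Φmat.map (algebraMap R K)) :=
      (Matrix.isUnit_iff_isUnit_det _).2 (isUnit_iff_ne_zero.2 hdetK)
    have hli := Matrix.linearIndependent_cols_iff_isUnit.2 hunit
    set v : ((∀ j, Fin (n j)) × (∀ j, Fin (n j))) →
        Matrix (∀ j, Fin (n j)) (∀ j, Fin (n j)) K :=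
      fun p => (w p).map (algebraMap R K) with hv
    have hliv : LinearIndependent K v := by
      let L : Matrix (∀ j, Fin (n j)) (∀ j, Fin (n j)) K →ₗ[K]
          (((∀ j, Fin (n j)) × (∀ j, Fin (n j))) → K) :=
        { toFun := fun M q => M q.1 q.2
          map_add' := fun _ _ => rfl
          map_smul' := fun _ _ => rfl }
      refine LinearIndependent.of_comp L ?_
      have hLv : L ∘ v = fun p => (Φmat.map (algebraMap R K)).transpose p := by
        funext p q; rfl
      rw [hLv]; exact hli
    have hcard : Fintype.card ((∀ j, Fin (n j)) × (∀ j, Fin (n j)))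
        = Module.finrank K (Matrix (∀ j, Fin (n j)) (∀ j, Fin (n j)) K) := by
      rw [Module.finrank_matrix]
      simp [Fintype.card_prod]
    have hspan := hliv.span_eq_top_of_card_eq_finrank' hcard
    rw [eq_top_iff, ← hspan]
    apply Submodule.span_mono
    rintro x ⟨p, rfl⟩
    exact ⟨w p, hwGM p, rfl⟩
end

section
/- The algebra of multipartite generic matrices GM_{n_1,…,n_G}(x) is a domain: for all p, q ∈ GM_{n_1,…,n_G}(x), if p·q = 0 then p = 0 or q = 0. (This expresses that the ring of central quotients of GM_{n_1,…,n_G}(x) is a skew field.) -/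
namespace GMD
open MvPolynomial Matrix Finset Fin.NatCast

variable {K : Type*} [Field K]

theorem pow_mod_eq {m : ℕ} {z : K} (hz : z ^ m = 1) (c : ℕ) : z ^ (c % m) = z ^ c := by
  conv_rhs => rw [← Nat.div_add_mod c m]
  rw [pow_add, pow_mul, hz, one_pow, one_mul]

theorem pow_val_natCast {m : ℕ} [NeZero m] {z : K} (hz : z ^ m = 1) (c : ℕ) :
    z ^ (((c : Fin m)) : ℕ) = z ^ c := by
  rw [Fin.val_natCast, pow_mod_eq hz]

theorem pow_fin_add {m : ℕ} [NeZero m] {z : K} (hz : z ^ m = 1) (x y : Fin m) :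
    z ^ ((x + y : Fin m) : ℕ) = z ^ (x : ℕ) * z ^ (y : ℕ) := by
  rw [Fin.add_def]; dsimp only
  rw [pow_mod_eq hz, pow_add]

variable {G : ℕ} (n : Fin G → ℕ) [∀ i, NeZero (n i)] (ζ : Fin G → K)

/-- The index of rows/columns. -/
abbrev Idx := ∀ j, Fin (n j)

/-- The grading monoid / exponents for the auxiliary variables `s i = (i,false)`, `t i = (i,true)`. -/
abbrev Dg (G : ℕ) : Type := (Fin G × Bool) →₀ ℕ

/-- Clock-and-shift pattern matrix for multidegree `d`. -/
def Emat (d : Dg G) : Matrix (Idx n) (Idx n) K :=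
  Matrix.of fun α β =>
    if (∀ i, β i = α i + ((d (i, true) : ℕ) : Fin (n i))) then
      ∏ i, ζ i ^ (d (i, false) * ((α i : ℕ))) else 0

theorem Emat_apply (d : Dg G) (α β : Idx n) :
    Emat n ζ d α β =
      if (∀ i, β i = α i + ((d (i, true) : ℕ) : Fin (n i))) then
        ∏ i, ζ i ^ (d (i, false) * ((α i : ℕ))) else 0 := rfl

theorem Emat_zero : Emat n ζ 0 = 1 := by
  ext α β
  rw [Emat_apply, Matrix.one_apply]
  simp only [Finsupp.coe_zero, Pi.zero_apply, Nat.cast_zero, add_zero, pow_zero, mul_zero,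
    prod_const_one]
  congr 1
  · simp [eq_comm, funext_iff]
  · simp

theorem Emat_ne_zero (hζ : ∀ i, IsPrimitiveRoot (ζ i) (n i)) (d : Dg G) : Emat n ζ d ≠ 0 := by
  intro h
  have h2 := congrFun (congrFun h (fun i => 0)) (fun i => (0 : Fin (n i)) + ((d (i, true) : ℕ) : Fin (n i)))
  rw [Emat_apply] at h2
  simp at h2

/-- The commutation scalar. -/
def gam (d e : Dg G) : K := ∏ i, ζ i ^ (e (i, false) * (((d (i, true) : ℕ) : Fin (n i)) : ℕ))

theorem gam_ne_zero (hζ : ∀ i, IsPrimitiveRoot (ζ i) (n i)) (d e : Dg G) : gam n ζ d e ≠ 0 := by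
  refine Finset.prod_ne_zero_iff.2 fun i _ => pow_ne_zero _ fun h0 => ?_
  have := (hζ i).pow_eq_one
  rw [h0, zero_pow (NeZero.ne (n i))] at this
  exact zero_ne_one this

theorem Emat_mul (hζ : ∀ i, IsPrimitiveRoot (ζ i) (n i)) (d e : Dg G) :
    Emat n ζ d * Emat n ζ e = gam n ζ d e • Emat n ζ (d + e) := by
  ext α β
  rw [Matrix.mul_apply]
  have key : ∀ γ : Idx n,
      Emat n ζ d α γ * Emat n ζ e γ β =
      if γ = (fun i => α i + ((d (i, true) : ℕ) : Fin (n i))) then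
        (∏ i, ζ i ^ (d (i, false) * ((α i : ℕ)))) * Emat n ζ e γ β else 0 := by
    intro γ
    rw [Emat_apply]
    by_cases hc : ∀ i, γ i = α i + ((d (i, true) : ℕ) : Fin (n i))
    · rw [if_pos hc, if_pos (funext hc)]
    · rw [if_neg hc, if_neg (fun hfe => hc (fun i => congrFun hfe i)), zero_mul]
  rw [Finset.sum_congr rfl (fun γ _ => key γ), Finset.sum_ite_eq' Finset.univ
    (fun i => α i + ((d (i, true) : ℕ) : Fin (n i))) _]
  rw [if_pos (Finset.mem_univ _), Matrix.smul_apply, Emat_apply, Emat_apply]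
  have hcond : (∀ i, β i = (α i + ((d (i, true) : ℕ) : Fin (n i))) + ((e (i, true) : ℕ) : Fin (n i))) ↔
      (∀ i, β i = α i + (((d + e) (i, true) : ℕ) : Fin (n i))) := by
    apply forall_congr'
    intro i
    rw [Finsupp.add_apply, Nat.cast_add, add_assoc]
  by_cases hc : ∀ i, β i = (α i + ((d (i, true) : ℕ) : Fin (n i))) + ((e (i, true) : ℕ) : Fin (n i))
  · rw [if_pos hc, if_pos (hcond.1 hc)]
    rw [smul_eq_mul, gam]
    rw [← Finset.prod_mul_distrib, ← Finset.prod_mul_distrib]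
    apply Finset.prod_congr rfl
    intro i _
    have hz : (ζ i) ^ (n i) = 1 := (hζ i).pow_eq_one
    have h1 : ζ i ^ (e (i, false) * ((α i + ((d (i, true) : ℕ) : Fin (n i)) : Fin (n i)) : ℕ)) =
        ζ i ^ (e (i, false) * (α i : ℕ)) * ζ i ^ (e (i, false) * (((d (i, true) : ℕ) : Fin (n i)) : ℕ)) := by
      rw [mul_comm (e (i, false)) _, pow_mul, pow_fin_add hz, mul_pow,
        ← pow_mul, ← pow_mul, mul_comm ((α i : ℕ)) _,
        mul_comm ((((d (i, true) : ℕ) : Fin (n i)) : ℕ)) _]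
    rw [h1, Finsupp.add_apply, add_mul, pow_add]
    ring
  · rw [if_neg hc, if_neg (fun h => hc (hcond.2 h)), mul_zero, smul_zero]


/-- The monomial matrices spanning the twisted algebra. -/
noncomputable def Mmat (d : Dg G) : Matrix (Idx n) (Idx n) (MvPolynomial (Fin G × Bool) K) :=
  Matrix.of fun α β => MvPolynomial.monomial d (Emat n ζ d α β)

theorem Mmat_apply (d : Dg G) (α β : Idx n) :
    Mmat n ζ d α β = MvPolynomial.monomial d (Emat n ζ d α β) := rfl

theorem Mmat_zero : Mmat n ζ 0 = 1 := by
  ext α β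
  rw [Mmat_apply, Emat_zero]
  by_cases h : α = β
  · subst h; simp
  · simp [Matrix.one_apply_ne h]

theorem Mmat_mul (hζ : ∀ i, IsPrimitiveRoot (ζ i) (n i)) (d e : Dg G) :
    Mmat n ζ d * Mmat n ζ e = gam n ζ d e • Mmat n ζ (d + e) := by
  refine Matrix.ext fun α β => ?_
  rw [Matrix.mul_apply]
  have : ∀ γ, Mmat n ζ d α γ * Mmat n ζ e γ β =
      MvPolynomial.monomial (d + e) (Emat n ζ d α γ * Emat n ζ e γ β) := by
    intro γ; rw [Mmat_apply, Mmat_apply, MvPolynomial.monomial_mul]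
  rw [Finset.sum_congr rfl (fun γ _ => this γ), ← map_sum, ← Matrix.mul_apply, Emat_mul n ζ hζ,
    Matrix.smul_apply, Matrix.smul_apply, Mmat_apply]
  exact _root_.map_smul (MvPolynomial.monomial (d + e) : K →ₗ[K] _) _ _

/-- Coefficient extraction, as a `K`-linear map. -/
noncomputable def coeffM (f : Dg G) :
    Matrix (Idx n) (Idx n) (MvPolynomial (Fin G × Bool) K) →ₗ[K] Matrix (Idx n) (Idx n) K where
  toFun x := Matrix.of fun α β => MvPolynomial.coeff f (x α β)
  map_add' x y := by ext α β; exact MvPolynomial.coeff_add f _ _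
  map_smul' a x := by ext α β; exact MvPolynomial.coeff_smul f a _

theorem coeffM_apply (f : Dg G) (x : Matrix (Idx n) (Idx n) (MvPolynomial (Fin G × Bool) K))
    (α β : Idx n) :
    coeffM n f x α β = MvPolynomial.coeff f (x α β) := rfl

theorem coeffM_Mmat (f d : Dg G) :
    coeffM n f (Mmat n ζ d) = if f = d then Emat n ζ f else 0 := by
  ext α β
  rw [coeffM_apply, Mmat_apply, MvPolynomial.coeff_monomial]
  by_cases h : f = d
  · subst h; simp
  · simp [h, Ne.symm h]

/-- The span of the monomial matrices. -/
noncomputable def Tspan : Submodule K (Matrix (Idx n) (Idx n) (MvPolynomial (Fin G × Bool) K)) :=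
  Submodule.span K (Set.range (Mmat n ζ))

theorem Mmat_mem (d : Dg G) : Mmat n ζ d ∈ Tspan n ζ :=
  Submodule.subset_span ⟨d, rfl⟩

theorem one_mem_Tspan : (1 : Matrix (Idx n) (Idx n) (MvPolynomial (Fin G × Bool) K)) ∈ Tspan n ζ := by
  rw [← Mmat_zero]; exact Mmat_mem n ζ 0

theorem repr_mul (hζ : ∀ i, IsPrimitiveRoot (ζ i) (n i)) (c e : Dg G →₀ K) :
    (c.sum fun d a => a • Mmat n ζ d) * (e.sum fun d a => a • Mmat n ζ d) =
      ∑ a ∈ c.support, ∑ b ∈ e.support,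
        (c a * e b * gam n ζ a b) • Mmat n ζ (a + b) := by
  rw [Finsupp.sum, Finsupp.sum, Finset.sum_mul]
  refine Finset.sum_congr rfl fun a _ => ?_
  rw [Finset.mul_sum]
  refine Finset.sum_congr rfl fun b _ => ?_
  rw [smul_mul_assoc, mul_smul_comm, smul_smul, Mmat_mul n ζ hζ, smul_smul, mul_assoc]

theorem mul_mem_Tspan (hζ : ∀ i, IsPrimitiveRoot (ζ i) (n i))
    {x y : Matrix (Idx n) (Idx n) (MvPolynomial (Fin G × Bool) K)}
    (hx : x ∈ Tspan n ζ) (hy : y ∈ Tspan n ζ) : x * y ∈ Tspan n ζ := by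
  obtain ⟨c, rfl⟩ := Finsupp.mem_span_range_iff_exists_finsupp.1 hx
  obtain ⟨e, rfl⟩ := Finsupp.mem_span_range_iff_exists_finsupp.1 hy
  rw [repr_mul n ζ hζ]
  exact Submodule.sum_mem _ fun a _ => Submodule.sum_mem _ fun b _ =>
    Submodule.smul_mem _ _ (Mmat_mem n ζ _)

theorem Tspan_mul_ne_zero (hζ : ∀ i, IsPrimitiveRoot (ζ i) (n i))
    {x y : Matrix (Idx n) (Idx n) (MvPolynomial (Fin G × Bool) K)}
    (hx : x ∈ Tspan n ζ) (hy : y ∈ Tspan n ζ) (hx0 : x ≠ 0) (hy0 : y ≠ 0) : x * y ≠ 0 := by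
  obtain ⟨c, rfl⟩ := Finsupp.mem_span_range_iff_exists_finsupp.1 hx
  obtain ⟨e, rfl⟩ := Finsupp.mem_span_range_iff_exists_finsupp.1 hy
  have hc : c ≠ 0 := by rintro rfl; simp at hx0
  have he : e ≠ 0 := by rintro rfl; simp at hy0
  obtain ⟨d0, hd0, e0, he0, huniq⟩ := UniqueSums.uniqueAdd_of_nonempty
    (Finsupp.support_nonempty_iff.2 hc) (Finsupp.support_nonempty_iff.2 he)
  intro hzero
  have hco : coeffM n (d0 + e0) ((c.sum fun d a => a • Mmat n ζ d) *
      (e.sum fun d a => a • Mmat n ζ d)) = (c d0 * e e0 * gam n ζ d0 e0) • Emat n ζ (d0 + e0) := by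
    rw [repr_mul n ζ hζ, map_sum]
    rw [Finset.sum_eq_single d0]
    · rw [map_sum, Finset.sum_eq_single e0]
      · rw [_root_.map_smul, coeffM_Mmat, if_pos rfl]
      · intro b hb hbne
        rw [_root_.map_smul, coeffM_Mmat, if_neg, smul_zero]
        intro habs
        exact hbne (huniq hd0 hb habs.symm).2
      · intro habs; exact absurd he0 habs
    · intro a ha hane
      rw [map_sum, Finset.sum_eq_zero]
      intro b hb
      rw [_root_.map_smul, coeffM_Mmat, if_neg, smul_zero]
      intro habs
      exact hane (huniq ha hb habs.symm).1
    · intro habs; exact absurd hd0 habs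
  rw [hzero, map_zero] at hco
  have : (c d0 * e e0 * gam n ζ d0 e0) • Emat n ζ (d0 + e0) ≠ 0 :=
    smul_ne_zero (mul_ne_zero (mul_ne_zero (Finsupp.mem_support_iff.1 hd0)
      (Finsupp.mem_support_iff.1 he0)) (gam_ne_zero n ζ hζ d0 e0))
      (Emat_ne_zero n ζ hζ _)
  exact this hco.symm


section Tau
variable {R S : Type*} [CommRing R] [CommRing S] {ι : Type*} [Fintype ι] [DecidableEq ι]
  {m : ι → ℕ}

theorem tau_apply (i : ι) (A : Matrix (Fin (m i)) (Fin (m i)) R) (α β : ∀ j, Fin (m j)) :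
    tau m i A α β = A (α i) (β i) * ∏ j ∈ Finset.univ.erase i, (if α j = β j then (1 : R) else 0) :=
  rfl

theorem tau_map (f : R →+* S) (i : ι) (A : Matrix (Fin (m i)) (Fin (m i)) R) :
    (tau m i A).map f = tau m i (A.map f) := by
  refine Matrix.ext fun α β => ?_
  rw [Matrix.map_apply, tau_apply, tau_apply, _root_.map_mul, map_prod, Matrix.map_apply]
  congr 1
  refine Finset.prod_congr rfl fun j _ => ?_
  rw [apply_ite f, _root_.map_one, _root_.map_zero]

theorem tau_smul {K : Type*} [CommRing K] [Algebra K R] (a : K) (i : ι)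
    (A : Matrix (Fin (m i)) (Fin (m i)) R) :
    tau m i (a • A) = a • tau m i A := by
  refine Matrix.ext fun α β => ?_
  rw [tau_apply, Matrix.smul_apply, Matrix.smul_apply, tau_apply, smul_mul_assoc]

theorem tau_sum {γ : Type*} (s : Finset γ) (i : ι)
    (A : γ → Matrix (Fin (m i)) (Fin (m i)) R) :
    tau m i (∑ x ∈ s, A x) = ∑ x ∈ s, tau m i (A x) := by
  refine Matrix.ext fun α β => ?_
  simp only [tau_apply, Matrix.sum_apply, Finset.sum_mul]

end Tau

section BmatSec
variable {K : Type*} [Field K] {G : ℕ} (n : Fin G → ℕ) [∀ i, NeZero (n i)] (ζ : Fin G → K)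

/-- The exponent of the slot monomial `s_i^a t_i^b`. -/
noncomputable def dsing (i : Fin G) (a b : Fin (n i)) : Dg G :=
  Finsupp.single (i, false) (a : ℕ) + Finsupp.single (i, true) (b : ℕ)

theorem dsing_false (i j : Fin G) (a b : Fin (n i)) :
    dsing n i a b (j, false) = if i = j then (a : ℕ) else 0 := by
  rw [dsing, Finsupp.add_apply, Finsupp.single_apply, Finsupp.single_apply]
  simp [Prod.ext_iff]

theorem dsing_true (i j : Fin G) (a b : Fin (n i)) :
    dsing n i a b (j, true) = if i = j then (b : ℕ) else 0 := by
  rw [dsing, Finsupp.add_apply, Finsupp.single_apply, Finsupp.single_apply]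
  simp [Prod.ext_iff]

/-- The basic specialized matrices in one slot. -/
noncomputable def Bmat (i : Fin G) (a b : Fin (n i)) :
    Matrix (Fin (n i)) (Fin (n i)) (MvPolynomial (Fin G × Bool) K) :=
  Matrix.of fun α β =>
    MvPolynomial.monomial (dsing n i a b)
      (if β = α + b then ζ i ^ ((a : ℕ) * (α : ℕ)) else 0)

theorem Bmat_apply (i : Fin G) (a b α β : Fin (n i)) :
    Bmat n ζ i a b α β =
      MvPolynomial.monomial (dsing n i a b)
        (if β = α + b then ζ i ^ ((a : ℕ) * (α : ℕ)) else 0) := rfl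

theorem tau_Bmat (i : Fin G) (a b : Fin (n i)) :
    tau n i (Bmat n ζ i a b) = Mmat n ζ (dsing n i a b) := by
  refine Matrix.ext fun α β => ?_
  rw [tau_apply, Bmat_apply, Mmat_apply, Emat_apply, Finset.prod_boole]
  have hcond : (∀ j, β j = α j + (((dsing n i a b) (j, true) : ℕ) : Fin (n j))) ↔
      (β i = α i + b ∧ ∀ j ∈ Finset.univ.erase i, α j = β j) := by
    constructor
    · intro h
      refine ⟨?_, fun j hj => ?_⟩
      · have := h i
        rwa [dsing_true, if_pos rfl, Fin.cast_val_eq_self] at this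
      · have hji : i ≠ j := fun he => (Finset.mem_erase.1 hj).1 he.symm
        have := h j
        rwa [dsing_true, if_neg hji, Nat.cast_zero, add_zero, eq_comm] at this
    · rintro ⟨h1, h2⟩ j
      by_cases hji : i = j
      · subst hji; rwa [dsing_true, if_pos rfl, Fin.cast_val_eq_self]
      · rw [dsing_true, if_neg hji, Nat.cast_zero, add_zero]
        exact (h2 j (Finset.mem_erase.2 ⟨fun he => hji he.symm, Finset.mem_univ j⟩)).symm
  have hprod : (∏ j, ζ j ^ ((dsing n i a b) (j, false) * ((α j : ℕ)))) =
      ζ i ^ ((a : ℕ) * ((α i : ℕ))) := by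
    rw [Finset.prod_eq_single_of_mem i (Finset.mem_univ i)]
    · rw [dsing_false, if_pos rfl]
    · intro j _ hji
      rw [dsing_false, if_neg (fun he => hji he.symm), zero_mul, pow_zero]
  by_cases h1 : β i = α i + b
  · by_cases h2 : ∀ j ∈ Finset.univ.erase i, α j = β j
    · rw [if_pos h1, if_pos h2, mul_one, if_pos (hcond.2 ⟨h1, h2⟩), hprod]
    · rw [if_pos h1, if_neg h2, mul_zero, if_neg (fun h => h2 (hcond.1 h).2), map_zero]
  · rw [if_neg h1, map_zero, zero_mul, if_neg (fun h => h1 (hcond.1 h).1), map_zero]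

end BmatSec


section Clock
variable {K : Type*} [Field K]

theorem clock_sum {m : ℕ} [NeZero m] {z : K} (hz : IsPrimitiveRoot z m) (hm : (m : K) ≠ 0)
    (α β α' β' : Fin m) :
    ∑ w : Fin m × Fin m, (m : K)⁻¹ *
      ((if β = α + w.2 then (z ^ ((w.1 : ℕ) * (α : ℕ)))⁻¹ else 0) *
       (if β' = α' + w.2 then z ^ ((w.1 : ℕ) * (α' : ℕ)) else 0)) =
    if (α, β) = (α', β') then 1 else 0 := by
  have hz0 : z ≠ 0 := fun h0 => by
    have := hz.pow_eq_one
    rw [h0, zero_pow (NeZero.ne m)] at this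
    exact zero_ne_one this
  rw [Fintype.sum_prod_type]
  have key : ∀ a b : Fin m, ((m : K)⁻¹ *
      ((if β = α + b then (z ^ ((a : ℕ) * (α : ℕ)))⁻¹ else 0) *
       (if β' = α' + b then z ^ ((a : ℕ) * (α' : ℕ)) else 0))) =
      if b = β - α then (m : K)⁻¹ * ((z ^ ((a : ℕ) * (α : ℕ)))⁻¹ *
        (if β' = α' + b then z ^ ((a : ℕ) * (α' : ℕ)) else 0)) else 0 := by
    intro a b
    have hcond : (β = α + b) ↔ (b = β - α) := by
      constructor <;> intro h <;> subst h
      · rw [add_sub_cancel_left]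
      · rw [add_sub_cancel]
    by_cases h : b = β - α
    · rw [if_pos h, if_pos (hcond.2 h)]
    · rw [if_neg h, if_neg (fun hh => h (hcond.1 hh)), zero_mul, mul_zero]
  have step1 : ∀ a : Fin m, (∑ b : Fin m, (m : K)⁻¹ *
      ((if β = α + b then (z ^ ((a : ℕ) * (α : ℕ)))⁻¹ else 0) *
       (if β' = α' + b then z ^ ((a : ℕ) * (α' : ℕ)) else 0))) =
      (m : K)⁻¹ * ((z ^ ((a : ℕ) * (α : ℕ)))⁻¹ *
        (if β' = α' + (β - α) then z ^ ((a : ℕ) * (α' : ℕ)) else 0)) := by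
    intro a
    rw [Finset.sum_congr rfl (fun b _ => key a b),
      Finset.sum_ite_eq' Finset.univ (β - α) _, if_pos (Finset.mem_univ _)]
  rw [Finset.sum_congr rfl (fun a _ => step1 a)]
  have hadd : ∀ u v : Fin m, u + (v - u) = v := fun u v => by rw [add_comm, sub_add_cancel]
  have hpows : ∀ x y : ℕ, ((z ^ x)⁻¹) ^ y = (z ^ (y * x))⁻¹ := fun x y => by
    rw [inv_pow, ← pow_mul, mul_comm]
  by_cases hbe : β' = α' + (β - α)
  · simp only [if_pos hbe]
    have hterm : ∀ a : Fin m, (m : K)⁻¹ * ((z ^ ((a : ℕ) * (α : ℕ)))⁻¹ * z ^ ((a : ℕ) * (α' : ℕ))) =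
        (m : K)⁻¹ * (z ^ ((α' : ℕ)) * (z ^ ((α : ℕ)))⁻¹) ^ (a : ℕ) := by
      intro a
      congr 1
      rw [mul_pow, hpows, ← pow_mul, mul_comm ((α' : ℕ)) ((a : ℕ))]
      exact mul_comm _ _
    rw [Finset.sum_congr rfl (fun a _ => hterm a), ← Finset.mul_sum]
    rw [Fin.sum_univ_eq_sum_range (fun i => (z ^ ((α' : ℕ)) * (z ^ ((α : ℕ)))⁻¹) ^ i) m]
    by_cases haa : α = α'
    · subst haa
      rw [mul_inv_cancel₀ (pow_ne_zero _ hz0)]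
      simp only [one_pow, Finset.sum_const, Finset.card_range, nsmul_eq_mul, mul_one]
      rw [inv_mul_cancel₀ hm, if_pos]
      have : β' = β := by rw [hbe, hadd]
      rw [this]
    · have hpow1 : ∀ x : ℕ, z ^ (x * m) = 1 := fun x => by
        rw [mul_comm, pow_mul, hz.pow_eq_one, one_pow]
      have hmu : z ^ ((α' : ℕ)) * (z ^ ((α : ℕ)))⁻¹ ≠ 1 := by
        intro h1
        have h2 : z ^ ((α' : ℕ)) = z ^ ((α : ℕ)) :=
          (mul_inv_eq_one₀ (pow_ne_zero _ hz0)).1 h1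
        exact haa (Fin.ext (hz.pow_inj α.isLt α'.isLt h2.symm))
      have hmum : (z ^ ((α' : ℕ)) * (z ^ ((α : ℕ)))⁻¹) ^ m = 1 := by
        rw [mul_pow, ← pow_mul, hpow1, one_mul, inv_pow, ← pow_mul, hpow1, inv_one]
      have hgeo := geom_sum_mul (z ^ ((α' : ℕ)) * (z ^ ((α : ℕ)))⁻¹) m
      rw [hmum, sub_self] at hgeo
      rcases mul_eq_zero.1 hgeo with h | h
      · rw [h, mul_zero, if_neg]
        intro habs
        exact haa (congrArg Prod.fst habs)
      · exact absurd (sub_eq_zero.1 h) hmu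
  · simp only [if_neg hbe, mul_zero, Finset.sum_const, smul_zero]
    rw [if_neg]
    intro habs
    rw [Prod.mk.injEq] at habs
    exact hbe (by rw [habs.1, habs.2, hadd])
end Clock


section QSec
variable {K : Type*} [Field K] {G : ℕ} (n : Fin G → ℕ) [∀ i, NeZero (n i)] (ζ : Fin G → K)

/-- Convenient notation for the fraction field of the auxiliary polynomial ring. -/
abbrev Lf (K : Type*) [Field K] (G : ℕ) : Type _ := FractionRing (MvPolynomial (Fin G × Bool) K)

noncomputable def Qmat (i : Fin G) :
    Matrix (Fin (n i) × Fin (n i)) (Fin (n i) × Fin (n i)) (Lf K G) :=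
  Matrix.of fun w u => algebraMap (MvPolynomial (Fin G × Bool) K) (Lf K G)
    (Bmat n ζ i w.1 w.2 u.1 u.2)

noncomputable def Qinv (i : Fin G) :
    Matrix (Fin (n i) × Fin (n i)) (Fin (n i) × Fin (n i)) (Lf K G) :=
  Matrix.of fun u w =>
    algebraMap (MvPolynomial (Fin G × Bool) K) (Lf K G)
      (MvPolynomial.C ((n i : K)⁻¹ *
        (if u.2 = u.1 + w.2 then (ζ i ^ ((w.1 : ℕ) * (u.1 : ℕ)))⁻¹ else 0))) *
    (algebraMap (MvPolynomial (Fin G × Bool) K) (Lf K G)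
      (MvPolynomial.monomial (dsing n i w.1 w.2) (1 : K)))⁻¹

theorem Qmat_apply (i : Fin G) (w u : Fin (n i) × Fin (n i)) :
    Qmat n ζ i w u = algebraMap (MvPolynomial (Fin G × Bool) K) (Lf K G)
      (Bmat n ζ i w.1 w.2 u.1 u.2) := rfl

theorem Qinv_apply (i : Fin G) (u w : Fin (n i) × Fin (n i)) :
    Qinv n ζ i u w =
      algebraMap (MvPolynomial (Fin G × Bool) K) (Lf K G)
        (MvPolynomial.C ((n i : K)⁻¹ *
          (if u.2 = u.1 + w.2 then (ζ i ^ ((w.1 : ℕ) * (u.1 : ℕ)))⁻¹ else 0))) *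
      (algebraMap (MvPolynomial (Fin G × Bool) K) (Lf K G)
        (MvPolynomial.monomial (dsing n i w.1 w.2) (1 : K)))⁻¹ := rfl

theorem algMap_Lf_injective :
    Function.Injective (algebraMap (MvPolynomial (Fin G × Bool) K) (Lf K G)) :=
  IsFractionRing.injective _ _

theorem Qinv_mul_Qmat [CharZero K] (hζ : ∀ i, IsPrimitiveRoot (ζ i) (n i)) (i : Fin G) :
    Qinv n ζ i * Qmat n ζ i = 1 := by
  refine Matrix.ext fun u u' => ?_
  rw [Matrix.mul_apply]
  have hmono : ∀ w : Fin (n i) × Fin (n i),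
      algebraMap (MvPolynomial (Fin G × Bool) K) (Lf K G)
        (MvPolynomial.monomial (dsing n i w.1 w.2) (1 : K)) ≠ 0 := by
    intro w h0
    have h1 : (MvPolynomial.monomial (dsing n i w.1 w.2) (1 : K)) = 0 :=
      algMap_Lf_injective (by rw [h0, map_zero])
    exact one_ne_zero ((MvPolynomial.monomial_eq_zero).1 h1)
  have key : ∀ w : Fin (n i) × Fin (n i), Qinv n ζ i u w * Qmat n ζ i w u' =
      algebraMap (MvPolynomial (Fin G × Bool) K) (Lf K G)
        (MvPolynomial.C ((n i : K)⁻¹ *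
          ((if u.2 = u.1 + w.2 then (ζ i ^ ((w.1 : ℕ) * (u.1 : ℕ)))⁻¹ else 0) *
           (if u'.2 = u'.1 + w.2 then ζ i ^ ((w.1 : ℕ) * (u'.1 : ℕ)) else 0)))) := by
    intro w
    have hB : Bmat n ζ i w.1 w.2 u'.1 u'.2 =
        MvPolynomial.C (if u'.2 = u'.1 + w.2 then ζ i ^ ((w.1 : ℕ) * (u'.1 : ℕ)) else 0) *
          MvPolynomial.monomial (dsing n i w.1 w.2) (1 : K) := by
      rw [MvPolynomial.C_mul_monomial, mul_one, Bmat_apply]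
    rw [Qinv_apply, Qmat_apply, hB,
      _root_.map_mul (algebraMap (MvPolynomial (Fin G × Bool) K) (Lf K G))
        (MvPolynomial.C (if u'.2 = u'.1 + w.2 then ζ i ^ ((w.1 : ℕ) * (u'.1 : ℕ)) else 0))
        (MvPolynomial.monomial (dsing n i w.1 w.2) (1 : K)),
      mul_mul_mul_comm, inv_mul_cancel₀ (hmono w), mul_one,
      ← _root_.map_mul (algebraMap (MvPolynomial (Fin G × Bool) K) (Lf K G)),
      ← MvPolynomial.C_mul, mul_assoc]
  rw [Finset.sum_congr rfl (fun w _ => key w), ← map_sum, ← map_sum]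
  rw [clock_sum (hζ i) (Nat.cast_ne_zero.2 (NeZero.ne (n i))) u.1 u.2 u'.1 u'.2]
  by_cases h : u = u'
  · subst h
    rw [if_pos rfl, Matrix.one_apply_eq]
    simp
  · rw [if_neg (fun habs => h (Prod.ext (congrArg Prod.fst habs) (congrArg Prod.snd habs))),
      Matrix.one_apply_ne h]
    simp

end QSec


section SubstSec
variable {k : Type*} [Field k] {K : Type*} [Field K] [Algebra k K]
  {G : ℕ} (g n : Fin G → ℕ) [∀ i, NeZero (n i)] (ζ : Fin G → K)

/-- The generic linear substitution, with coefficients written in extra variables. -/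
noncomputable def Theta : MvPolynomial (ZetaIdx g n) k →+*
    MvPolynomial (ZetaIdx g n ⊕ (Fin G × Bool)) K :=
  MvPolynomial.eval₂Hom ((MvPolynomial.C).comp (algebraMap k K))
    fun v => ∑ w : Fin (n v.1) × Fin (n v.1),
      MvPolynomial.X (Sum.inl ⟨v.1, (v.2.1, w.1, w.2)⟩) *
        (MvPolynomial.rename Sum.inr) (Bmat n ζ v.1 w.1 w.2 v.2.2.1 v.2.2.2)

/-- The inverse substitution, over the fraction field. -/
noncomputable def SubInvH : MvPolynomial (ZetaIdx g n ⊕ (Fin G × Bool)) K →+*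
    MvPolynomial (ZetaIdx g n) (Lf K G) :=
  MvPolynomial.eval₂Hom
    ((MvPolynomial.C).comp
      ((algebraMap (MvPolynomial (Fin G × Bool) K) (Lf K G)).comp (MvPolynomial.C)))
    (Sum.elim
      (fun v => ∑ u : Fin (n v.1) × Fin (n v.1),
        MvPolynomial.C (Qinv n ζ v.1 u (v.2.2.1, v.2.2.2)) *
          MvPolynomial.X ⟨v.1, (v.2.1, u.1, u.2)⟩)
      (fun w => MvPolynomial.C
        (algebraMap (MvPolynomial (Fin G × Bool) K) (Lf K G) (MvPolynomial.X w))))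

theorem SubInvH_rename (q : MvPolynomial (Fin G × Bool) K) :
    SubInvH g n ζ (MvPolynomial.rename Sum.inr q) =
      MvPolynomial.C (algebraMap (MvPolynomial (Fin G × Bool) K) (Lf K G) q) := by
  have := MvPolynomial.ringHom_ext
    (f := (SubInvH g n ζ).comp (MvPolynomial.rename
      (Sum.inr : (Fin G × Bool) → ZetaIdx g n ⊕ (Fin G × Bool))).toRingHom)
    (g := (MvPolynomial.C : Lf K G →+* MvPolynomial (ZetaIdx g n) (Lf K G)).comp
      (algebraMap (MvPolynomial (Fin G × Bool) K) (Lf K G)))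
    (fun a => by simp [SubInvH, MvPolynomial.rename_C])
    (fun w => by simp [SubInvH, MvPolynomial.rename_X])
  exact RingHom.congr_fun this q

theorem sumToIter_rename_inl (q : MvPolynomial (Fin G × Bool) K) :
    MvPolynomial.sumToIter K (Fin G × Bool) (ZetaIdx g n) (MvPolynomial.rename Sum.inl q) =
      MvPolynomial.map (MvPolynomial.C (σ := ZetaIdx g n)) q := by
  have := MvPolynomial.ringHom_ext
    (f := (MvPolynomial.sumToIter K (Fin G × Bool) (ZetaIdx g n)).comp (MvPolynomial.rename
      (Sum.inl : (Fin G × Bool) → (Fin G × Bool) ⊕ ZetaIdx g n)).toRingHom)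
    (g := (MvPolynomial.map (MvPolynomial.C (σ := ZetaIdx g n))))
    (fun a => by simp [MvPolynomial.rename_C, MvPolynomial.sumToIter_C])
    (fun w => by simp [MvPolynomial.rename_X, MvPolynomial.sumToIter_Xl])
  exact RingHom.congr_fun this q

theorem SubInvH_comp_Theta [CharZero K] (hζ : ∀ i, IsPrimitiveRoot (ζ i) (n i))
    (f : MvPolynomial (ZetaIdx g n) k) :
    SubInvH g n ζ (Theta g n ζ f) =
      MvPolynomial.map ((algebraMap (MvPolynomial (Fin G × Bool) K) (Lf K G)).comp
        ((MvPolynomial.C).comp (algebraMap k K))) f := by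
  have := MvPolynomial.ringHom_ext
    (f := (SubInvH g n ζ).comp (Theta g n ζ))
    (g := MvPolynomial.map ((algebraMap (MvPolynomial (Fin G × Bool) K) (Lf K G)).comp
        ((MvPolynomial.C).comp (algebraMap k K))))
    (fun a => by simp [SubInvH, Theta, MvPolynomial.map_C])
    (fun v => ?_)
  · exact RingHom.congr_fun this f
  obtain ⟨i, j, α, β⟩ := v
  rw [RingHom.comp_apply, MvPolynomial.map_X]
  show SubInvH g n ζ (Theta g n ζ (MvPolynomial.X ⟨i, (j, α, β)⟩)) = _
  rw [Theta, MvPolynomial.eval₂Hom_X', map_sum]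
  have step : ∀ w : Fin (n i) × Fin (n i),
      SubInvH g n ζ (MvPolynomial.X (Sum.inl ⟨i, (j, w.1, w.2)⟩) *
        (MvPolynomial.rename Sum.inr) (Bmat n ζ i w.1 w.2 α β)) =
      ∑ u : Fin (n i) × Fin (n i),
        MvPolynomial.C (Qinv n ζ i u w * Qmat n ζ i w (α, β)) *
          MvPolynomial.X (⟨i, (j, u.1, u.2)⟩ : ZetaIdx g n) := by
    intro w
    rw [_root_.map_mul, SubInvH_rename]
    have h1 : SubInvH g n ζ (MvPolynomial.X (Sum.inl ⟨i, (j, w.1, w.2)⟩)) =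
        ∑ u : Fin (n i) × Fin (n i),
          MvPolynomial.C (Qinv n ζ i u w) * MvPolynomial.X ⟨i, (j, u.1, u.2)⟩ := by
      rw [SubInvH, MvPolynomial.eval₂Hom_X']
      simp only [Sum.elim_inl]
    rw [h1, Finset.sum_mul]
    refine Finset.sum_congr rfl fun u _ => ?_
    rw [Qmat_apply, mul_right_comm, ← MvPolynomial.C_mul]
  rw [Finset.sum_congr rfl fun w _ => step w, Finset.sum_comm]
  have final : ∀ u : Fin (n i) × Fin (n i),
      (∑ w : Fin (n i) × Fin (n i),
        MvPolynomial.C (Qinv n ζ i u w * Qmat n ζ i w (α, β)) *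
          MvPolynomial.X (⟨i, (j, u.1, u.2)⟩ : ZetaIdx g n)) =
      (if u = (α, β) then (1 : Lf K G) else 0) •
        MvPolynomial.X (⟨i, (j, u.1, u.2)⟩ : ZetaIdx g n) := by
    intro u
    have hsum : (∑ w : Fin (n i) × Fin (n i),
        MvPolynomial.C (Qinv n ζ i u w * Qmat n ζ i w (α, β)) :
          MvPolynomial (ZetaIdx g n) (Lf K G)) =
        MvPolynomial.C ((Qinv n ζ i * Qmat n ζ i) u (α, β)) := by
      rw [Matrix.mul_apply]
      exact (map_sum (MvPolynomial.C : Lf K G →+* MvPolynomial (ZetaIdx g n) (Lf K G)) _ _).symm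
    rw [← Finset.sum_mul, hsum, Qinv_mul_Qmat n ζ hζ i, Matrix.one_apply,
      MvPolynomial.smul_eq_C_mul]
  rw [Finset.sum_congr rfl fun u _ => final u]
  have : ∀ u : Fin (n i) × Fin (n i),
      ((if u = (α, β) then (1 : Lf K G) else 0) •
        MvPolynomial.X (⟨i, (j, u.1, u.2)⟩ : ZetaIdx g n)) =
      (if u = (α, β) then (MvPolynomial.X (⟨i, (j, u.1, u.2)⟩ :
        ZetaIdx g n) : MvPolynomial (ZetaIdx g n) (Lf K G)) else 0) := by
    intro u
    by_cases h : u = (α, β)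
    · rw [if_pos h, if_pos h, one_smul]
    · rw [if_neg h, if_neg h, zero_smul]
  rw [Finset.sum_congr rfl fun u _ => this u, Finset.sum_ite_eq' Finset.univ (α, β) _,
    if_pos (Finset.mem_univ _)]

end SubstSec


section PsiSec
variable {k : Type*} [Field k] {K : Type*} [Field K] [Algebra k K]
  {G : ℕ} (g n : Fin G → ℕ) [∀ i, NeZero (n i)] (ζ : Fin G → K)

/-- The specialization homomorphism determined by scalars `c`. -/
noncomputable def psiHom (c : ZetaIdx g n → K) :
    MvPolynomial (ZetaIdx g n) k →+* MvPolynomial (Fin G × Bool) K :=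
  MvPolynomial.eval₂Hom ((MvPolynomial.C).comp (algebraMap k K))
    fun v => ∑ w : Fin (n v.1) × Fin (n v.1),
      MvPolynomial.C (c ⟨v.1, (v.2.1, w.1, w.2)⟩) * Bmat n ζ v.1 w.1 w.2 v.2.2.1 v.2.2.2

/-- Renaming `Sum.swap`, as a ring homomorphism defined by `eval₂`. -/
noncomputable def swapHom : MvPolynomial (ZetaIdx g n ⊕ (Fin G × Bool)) K →+*
    MvPolynomial ((Fin G × Bool) ⊕ ZetaIdx g n) K :=
  MvPolynomial.eval₂Hom
    (MvPolynomial.C : K →+* MvPolynomial ((Fin G × Bool) ⊕ ZetaIdx g n) K)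
    (fun v => MvPolynomial.X (Sum.swap v))

theorem swapHom_C (a : K) : swapHom g n (MvPolynomial.C a) = MvPolynomial.C a :=
  MvPolynomial.eval₂Hom_C _ _ a

theorem swapHom_X (v : ZetaIdx g n ⊕ (Fin G × Bool)) :
    swapHom (K := K) g n (MvPolynomial.X v) = MvPolynomial.X (Sum.swap v) :=
  MvPolynomial.eval₂Hom_X' _ _ v

/-- The inverse swap. -/
noncomputable def swapHom' : MvPolynomial ((Fin G × Bool) ⊕ ZetaIdx g n) K →+*
    MvPolynomial (ZetaIdx g n ⊕ (Fin G × Bool)) K :=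
  MvPolynomial.eval₂Hom
    (MvPolynomial.C : K →+* MvPolynomial (ZetaIdx g n ⊕ (Fin G × Bool)) K)
    (fun v => MvPolynomial.X (Sum.swap v))

theorem swapHom'_swapHom (x : MvPolynomial (ZetaIdx g n ⊕ (Fin G × Bool)) K) :
    swapHom' g n (swapHom g n x) = x := by
  have := MvPolynomial.ringHom_ext
    (f := (swapHom' (K := K) g n).comp (swapHom (K := K) g n))
    (g := RingHom.id (MvPolynomial (ZetaIdx g n ⊕ (Fin G × Bool)) K))
    (fun a => by simp [swapHom, swapHom'])
    (fun v => by simp [swapHom, swapHom'])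
  exact RingHom.congr_fun this x

theorem swapHom_injective : Function.Injective (swapHom (K := K) g n) := by
  intro x y hxy
  have := congrArg (swapHom' g n) hxy
  rwa [swapHom'_swapHom, swapHom'_swapHom] at this

theorem swapHom_rename_inr (q : MvPolynomial (Fin G × Bool) K) :
    swapHom g n (MvPolynomial.rename Sum.inr q) = MvPolynomial.rename Sum.inl q := by
  have := MvPolynomial.ringHom_ext
    (f := (swapHom (K := K) g n).comp (MvPolynomial.rename
      (Sum.inr : (Fin G × Bool) → ZetaIdx g n ⊕ (Fin G × Bool))).toRingHom)
    (g := (MvPolynomial.rename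
      (Sum.inl : (Fin G × Bool) → (Fin G × Bool) ⊕ ZetaIdx g n)).toRingHom)
    (fun a => by simp [swapHom, MvPolynomial.rename_C])
    (fun w => by simp [swapHom, MvPolynomial.rename_X])
  exact RingHom.congr_fun this q

/-- The composite specialization chain. -/
noncomputable def chainHom (c : ZetaIdx g n → K) :
    MvPolynomial (ZetaIdx g n) k →+* MvPolynomial (Fin G × Bool) (MvPolynomial (ZetaIdx g n) K) :=
  (MvPolynomial.sumToIter K (Fin G × Bool) (ZetaIdx g n)).comp
    ((swapHom g n).comp (Theta g n ζ))

theorem chainHom_apply (c : ZetaIdx g n → K) (x : MvPolynomial (ZetaIdx g n) k) :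
    chainHom g n ζ c x = MvPolynomial.sumToIter K (Fin G × Bool) (ZetaIdx g n)
      (swapHom g n (Theta g n ζ x)) := rfl

theorem psiHom_eq_chain (c : ZetaIdx g n → K) (f : MvPolynomial (ZetaIdx g n) k) :
    psiHom g n ζ c f =
      MvPolynomial.map (MvPolynomial.eval c : MvPolynomial (ZetaIdx g n) K →+* K)
        (chainHom g n ζ c f) := by
  have key := MvPolynomial.ringHom_ext
    (f := psiHom g n ζ c)
    (g := (MvPolynomial.map (MvPolynomial.eval c : MvPolynomial (ZetaIdx g n) K →+* K)).comp
      (chainHom g n ζ c))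
    (fun a => by
      rw [RingHom.comp_apply, chainHom_apply (k := k) g n ζ c, Theta, MvPolynomial.eval₂Hom_C,
        RingHom.comp_apply, swapHom_C, MvPolynomial.sumToIter_C, MvPolynomial.map_C,
        MvPolynomial.eval_C, psiHom, MvPolynomial.eval₂Hom_C, RingHom.comp_apply])
    (fun v => ?_)
  · exact RingHom.congr_fun key f
  obtain ⟨i, j, α, β⟩ := v
  rw [psiHom, MvPolynomial.eval₂Hom_X']
  rw [RingHom.comp_apply, chainHom_apply (k := k) g n ζ c, Theta, MvPolynomial.eval₂Hom_X',
    map_sum, map_sum, map_sum]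
  refine (Finset.sum_congr rfl fun w _ => ?_).symm
  rw [_root_.map_mul, swapHom_X, Sum.swap_inl, swapHom_rename_inr]
  rw [_root_.map_mul, MvPolynomial.sumToIter_Xr, sumToIter_rename_inl,
    _root_.map_mul, MvPolynomial.map_C, MvPolynomial.eval_X, MvPolynomial.map_map]
  have hid : ((MvPolynomial.eval c : MvPolynomial (ZetaIdx g n) K →+* K).comp
      (MvPolynomial.C : K →+* MvPolynomial (ZetaIdx g n) K)) = RingHom.id K :=
    RingHom.ext fun a => MvPolynomial.eval_C a
  rw [hid, MvPolynomial.map_id]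

theorem exists_good_c [CharZero K] (hζ : ∀ i, IsPrimitiveRoot (ζ i) (n i))
    {f : MvPolynomial (ZetaIdx g n) k} (hf : f ≠ 0) :
    ∃ c : ZetaIdx g n → K, psiHom g n ζ c f ≠ 0 := by
  have hTheta : Theta g n ζ f ≠ 0 := by
    intro h0
    have h1 := SubInvH_comp_Theta g n ζ hζ f
    rw [h0, map_zero] at h1
    have hκ : Function.Injective ((algebraMap (MvPolynomial (Fin G × Bool) K) (Lf K G)).comp
        ((MvPolynomial.C).comp (algebraMap k K))) := RingHom.injective _
    exact hf (MvPolynomial.map_injective _ hκ (by rw [← h1, map_zero]))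
  have hP2 : MvPolynomial.sumToIter K (Fin G × Bool) (ZetaIdx g n)
      (swapHom g n (Theta g n ζ f)) ≠ 0 := by
    intro h0
    have hinj1 : Function.Injective
        (MvPolynomial.sumToIter K (Fin G × Bool) (ZetaIdx g n)) := by
      have hcoe : ⇑(MvPolynomial.sumRingEquiv K (Fin G × Bool) (ZetaIdx g n)) =
          ⇑(MvPolynomial.sumToIter K (Fin G × Bool) (ZetaIdx g n)) := by
        have h := MvPolynomial.ringHom_ext
          (f := (MvPolynomial.sumRingEquiv K (Fin G × Bool) (ZetaIdx g n)).toRingHom)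
          (g := MvPolynomial.sumToIter K (Fin G × Bool) (ZetaIdx g n))
          (fun a => by simp [MvPolynomial.sumToIter_C])
          (fun v => by rcases v with b | c <;> simp [MvPolynomial.sumToIter_Xl, MvPolynomial.sumToIter_Xr])
        exact congrArg DFunLike.coe h
      rw [← hcoe]
      exact (MvPolynomial.sumRingEquiv K (Fin G × Bool) (ZetaIdx g n)).injective
    have h1 : swapHom g n (Theta g n ζ f) = 0 := hinj1 (by rw [h0, map_zero])
    exact hTheta (swapHom_injective g n (by rw [h1, map_zero]))
  obtain ⟨w, hw⟩ := MvPolynomial.ne_zero_iff.1 hP2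
  have hex : ∃ c : ZetaIdx g n → K, MvPolynomial.eval c
      (MvPolynomial.coeff w (MvPolynomial.sumToIter K (Fin G × Bool) (ZetaIdx g n)
        (swapHom g n (Theta g n ζ f)))) ≠ 0 := by
    by_contra hcon
    push_neg at hcon
    exact hw (MvPolynomial.funext fun x => by rw [hcon x, map_zero])
  obtain ⟨c, hc⟩ := hex
  refine ⟨c, fun h0 => hc ?_⟩
  rw [psiHom_eq_chain] at h0
  have h2 := congrArg (MvPolynomial.coeff w) h0
  rw [MvPolynomial.coeff_map, MvPolynomial.coeff_zero, chainHom_apply] at h2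
  exact h2

theorem psi_mem_Tspan [CharZero K] (hζ : ∀ i, IsPrimitiveRoot (ζ i) (n i))
    (c : ZetaIdx g n → K)
    {p : Matrix (Idx n) (Idx n) (MvPolynomial (ZetaIdx g n) k)} (hp : p ∈ GM k g n) :
    (psiHom g n ζ c).mapMatrix p ∈ Tspan n ζ := by
  refine Algebra.adjoin_induction ?_ ?_ ?_ ?_ hp
  · rintro x ⟨i, j, rfl⟩
    rw [RingHom.mapMatrix_apply, tau_map]
    have h2 : (genMat k g n i j).map (psiHom g n ζ c) =
        ∑ w : Fin (n i) × Fin (n i),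
          (c ⟨i, (j, w.1, w.2)⟩) • Bmat n ζ i w.1 w.2 := by
      refine Matrix.ext fun α β => ?_
      rw [Matrix.map_apply, Matrix.sum_apply]
      show psiHom g n ζ c (MvPolynomial.X ⟨i, (j, α, β)⟩) = _
      rw [psiHom, MvPolynomial.eval₂Hom_X']
      refine Finset.sum_congr rfl fun u _ => ?_
      rw [Matrix.smul_apply, MvPolynomial.smul_eq_C_mul]
    rw [h2, tau_sum]
    refine Submodule.sum_mem _ fun u _ => ?_
    rw [tau_smul, tau_Bmat]
    exact Submodule.smul_mem _ _ (Mmat_mem n ζ _)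
  · intro r
    have h3 : (psiHom g n ζ c).mapMatrix (algebraMap k
        (Matrix (Idx n) (Idx n) (MvPolynomial (ZetaIdx g n) k)) r) =
        (algebraMap k K r) • (1 : Matrix (Idx n) (Idx n) (MvPolynomial (Fin G × Bool) K)) := by
      refine Matrix.ext fun α β => ?_
      rw [RingHom.mapMatrix_apply, Matrix.map_apply, Matrix.algebraMap_matrix_apply,
        Matrix.smul_apply]
      by_cases h : α = β
      · subst h
        rw [if_pos rfl, MvPolynomial.algebraMap_eq, psiHom, MvPolynomial.eval₂Hom_C,
          RingHom.comp_apply,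
          show (1 : Matrix (Idx n) (Idx n) (MvPolynomial (Fin G × Bool) K)) α α = 1 from
            Matrix.one_apply_eq α,
          MvPolynomial.smul_eq_C_mul, mul_one]
      · rw [if_neg h, map_zero,
          show (1 : Matrix (Idx n) (Idx n) (MvPolynomial (Fin G × Bool) K)) α β = 0 from
            Matrix.one_apply_ne h,
          smul_zero]
    rw [h3]
    exact Submodule.smul_mem _ _ (one_mem_Tspan n ζ)
  · intro x y _ _ hx' hy'
    rw [map_add]
    exact Submodule.add_mem _ hx' hy'
  · intro x y _ _ hx' hy'
    rw [_root_.map_mul]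
    exact mul_mem_Tspan n ζ hζ hx' hy'

end PsiSec

end GMD

/-- from Proposition 2.3. The algebra of multipartite generic matrices
`GM_{n_1,…,n_G}(x)` is a domain: a product of two of its elements vanishes only if one of the
factors does. (This expresses that the ring of central quotients of `GM_{n_1,…,n_G}(x)` is a
skew field.) -/
theorem GM_is_domain {k : Type*} [Field k] [CharZero k] {G : ℕ} (g n : Fin G → ℕ)
    (p q : Matrix (∀ j, Fin (n j)) (∀ j, Fin (n j)) (MvPolynomial (ZetaIdx g n) k))
    (hp : p ∈ GM k g n) (hq : q ∈ GM k g n) (h : p * q = 0) :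
    p = 0 ∨ q = 0 := by
  by_cases hzero : ∃ i, n i = 0
  · obtain ⟨i, hi⟩ := hzero
    haveI hemp : IsEmpty (∀ j, Fin (n j)) :=
      ⟨fun α => by have := α i; rw [hi] at this; exact this.elim0⟩
    left
    refine Matrix.ext fun α β => ?_
    exact (hemp.false α).elim
  · push_neg at hzero
    haveI : ∀ i, NeZero (n i) := fun i => ⟨hzero i⟩
    haveI : CharZero (AlgebraicClosure k) :=
      charZero_of_injective_algebraMap (algebraMap k (AlgebraicClosure k)).injective
    haveI : ∀ i, NeZero ((n i : AlgebraicClosure k)) :=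
      fun i => ⟨Nat.cast_ne_zero.2 (hzero i)⟩
    have hζex : ∀ i, ∃ z : AlgebraicClosure k, IsPrimitiveRoot z (n i) := fun i =>
      HasEnoughRootsOfUnity.exists_primitiveRoot (AlgebraicClosure k) (n i)
    choose ζ hζ using hζex
    by_contra hcon
    push_neg at hcon
    obtain ⟨hp0, hq0⟩ := hcon
    have hpe : ∃ α β, p α β ≠ 0 := by
      by_contra hh
      push_neg at hh
      exact hp0 (Matrix.ext fun a b => hh a b)
    have hqe : ∃ α β, q α β ≠ 0 := by
      by_contra hh
      push_neg at hh
      exact hq0 (Matrix.ext fun a b => hh a b)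
    obtain ⟨α₀, β₀, hpe⟩ := hpe
    obtain ⟨α₁, β₁, hqe⟩ := hqe
    have hf : p α₀ β₀ * q α₁ β₁ ≠ 0 := mul_ne_zero hpe hqe
    obtain ⟨c, hc⟩ := GMD.exists_good_c g n ζ hζ hf
    have hmp := GMD.psi_mem_Tspan g n ζ hζ c hp
    have hmq := GMD.psi_mem_Tspan g n ζ hζ c hq
    have hpn : (GMD.psiHom g n ζ c).mapMatrix p ≠ 0 := by
      intro h0
      apply hc
      rw [_root_.map_mul]
      have hz : GMD.psiHom g n ζ c (p α₀ β₀) = 0 := by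
        rw [show GMD.psiHom g n ζ c (p α₀ β₀) =
          ((GMD.psiHom g n ζ c).mapMatrix p) α₀ β₀ from rfl, h0]
        rfl
      rw [hz, zero_mul]
    have hqn : (GMD.psiHom g n ζ c).mapMatrix q ≠ 0 := by
      intro h0
      apply hc
      rw [_root_.map_mul]
      have hz : GMD.psiHom g n ζ c (q α₁ β₁) = 0 := by
        rw [show GMD.psiHom g n ζ c (q α₁ β₁) =
          ((GMD.psiHom g n ζ c).mapMatrix q) α₁ β₁ from rfl, h0]
        rfl
      rw [hz, mul_zero]
    have hmul0 : (GMD.psiHom g n ζ c).mapMatrix p * (GMD.psiHom g n ζ c).mapMatrix q = 0 := by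
      rw [← _root_.map_mul, h, map_zero]
    exact GMD.Tspan_mul_ne_zero n ζ hζ hmp hmq hpn hqn hmul0
end

section
/- Let k be a field of characteristic 0, D a division ring that is a k-algebra, and A a k-algebra such that D ⊗_k A is a domain. Let Z = {Z_1,…,Z_g} and let p_1, p_2 ∈ D ⊗_k k⟨Z⟩, where k⟨Z⟩ is the free k-algebra on Z. For a ∈ A^g let p(a) ∈ D ⊗_k A denote the image of p under the k-algebra homomorphism id_D ⊗ ev_a, where ev_a : k⟨Z⟩ → A is determined by Z_i ↦ a_i. If p_1(a)·p_2(a) = 0 for every a ∈ A^g, then p_1(a) = 0 for all a ∈ A^g, or p_2(a) = 0 for all a ∈ A^g. -/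
open scoped TensorProduct

/-- Auxiliary: a polynomial over a `k`-algebra (with `k` an infinite field) vanishing under
scalar evaluation at every `t : k` is zero. -/
theorem aux_poly_eval_zero {k R : Type*} [Field k] [Infinite k] [Ring R] [Algebra k R]
    (q : Polynomial R)
    (hq : ∀ t : k, Polynomial.eval₂ (RingHom.id R) (algebraMap k R t) q = 0) : q = 0 := by
  ext n
  rw [Polynomial.coeff_zero]
  rw [← Module.forall_dual_apply_eq_zero_iff k]
  intro φ
  set P : Polynomial k :=
    (Finset.range (q.natDegree + 1)).sum
      (fun e => Polynomial.C (φ (q.coeff e)) * Polynomial.X ^ e) with hP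
  have hPeval : ∀ t : k, P.eval t = 0 := by
    intro t
    have h0 := congrArg φ (hq t)
    rw [Polynomial.eval₂_eq_sum_range, map_zero] at h0
    rw [map_sum] at h0
    rw [hP, Polynomial.eval_finset_sum]
    rw [← h0]
    apply Finset.sum_congr rfl
    intro e _
    have : (q.coeff e) * (algebraMap k R t) ^ e = (t ^ e) • (q.coeff e) := by
      rw [← map_pow, Algebra.smul_def, ← Algebra.commutes]
    simp only [RingHom.id_apply]
    rw [this, map_smul, smul_eq_mul, Polynomial.eval_mul, Polynomial.eval_C,
      Polynomial.eval_pow, Polynomial.eval_X, mul_comm]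
  have hP0 : P = 0 := Polynomial.funext (fun r => by rw [hPeval r, Polynomial.eval_zero])
  by_cases hn : n < q.natDegree + 1
  · have hc : P.coeff n = φ (q.coeff n) := by
      rw [hP, Polynomial.finset_sum_coeff]
      rw [Finset.sum_eq_single n]
      · simp
      · intro e _ hne
        simp [Polynomial.coeff_C_mul, Polynomial.coeff_X_pow, (Ne.symm hne)]
      · intro hmem
        exact absurd (Finset.mem_range.mpr hn) hmem
    rw [← hc, hP0, Polynomial.coeff_zero]
  · push_neg at hn
    rw [Polynomial.coeff_eq_zero_of_natDegree_lt (by omega), map_zero]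

/-- Lemma 4.3. Let `D` be a division ring that is a `k`-algebra and `A`
a `k`-algebra such that `D ⊗_k A` is a domain. If `p₁, p₂ ∈ D ⊗_k k⟨Z⟩` satisfy
`p₁(a) p₂(a) = 0` for every `a ∈ A^g` (where `p(a)` is the image of `p` under
`id_D ⊗ ev_a`), then `p₁(a) = 0` for all `a ∈ A^g` or `p₂(a) = 0` for all `a ∈ A^g`. -/
theorem tensor_free_algebra_zero_product {k : Type*} [Field k] [CharZero k]
    (D : Type*) [DivisionRing D] [Algebra k D]
    (A : Type*) [Ring A] [Algebra k A]
    (hnt : Nontrivial (D ⊗[k] A))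
    (hdom : ∀ x y : D ⊗[k] A, x * y = 0 → x = 0 ∨ y = 0)
    (g : ℕ) (p₁ p₂ : D ⊗[k] FreeAlgebra k (Fin g))
    (h : ∀ a : Fin g → A,
      Algebra.TensorProduct.map (AlgHom.id k D) (FreeAlgebra.lift k a) p₁ *
        Algebra.TensorProduct.map (AlgHom.id k D) (FreeAlgebra.lift k a) p₂ = 0) :
    (∀ a : Fin g → A,
      Algebra.TensorProduct.map (AlgHom.id k D) (FreeAlgebra.lift k a) p₁ = 0) ∨
    (∀ a : Fin g → A,
      Algebra.TensorProduct.map (AlgHom.id k D) (FreeAlgebra.lift k a) p₂ = 0) := by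
  classical
  by_contra hcon
  push_neg at hcon
  obtain ⟨⟨a, ha⟩, ⟨b, hb⟩⟩ := hcon
  haveI : NoZeroDivisors (D ⊗[k] A) :=
    ⟨fun {x y} hxy => hdom x y hxy⟩
  set R := D ⊗[k] A with hRdef
  -- the images of the generators
  let u : Fin g → Polynomial R := fun i =>
    Polynomial.C ((1 : D) ⊗ₜ[k] a i) + Polynomial.C ((1 : D) ⊗ₜ[k] (b i - a i)) * Polynomial.X
  let f₁ : D →ₐ[k] Polynomial R := Polynomial.CAlgHom.comp Algebra.TensorProduct.includeLeft
  let f₂ : FreeAlgebra k (Fin g) →ₐ[k] Polynomial R := FreeAlgebra.lift k u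
  have hcomm : ∀ (x : D) (y : FreeAlgebra k (Fin g)), Commute (f₁ x) (f₂ y) := by
    intro x y
    induction y using FreeAlgebra.induction with
    | grade0 r =>
      rw [AlgHom.commutes]
      exact (Algebra.commutes r (f₁ x)).symm
    | grade1 i =>
      have hι : f₂ (FreeAlgebra.ι k i) = u i := FreeAlgebra.lift_ι_apply u i
      rw [hι]
      have h1 : ∀ z : A, Commute ((x ⊗ₜ[k] (1 : A) : R)) ((1 : D) ⊗ₜ[k] z) := by
        intro z
        show _ = _
        rw [Algebra.TensorProduct.tmul_mul_tmul, Algebra.TensorProduct.tmul_mul_tmul,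
          one_mul, mul_one, one_mul, mul_one]
      have hf₁ : f₁ x = Polynomial.C ((x ⊗ₜ[k] (1 : A)) : R) := rfl
      rw [hf₁]
      refine Commute.add_right ?_ (Commute.mul_right ?_ (Polynomial.commute_X _).symm)
      · exact (h1 (a i)).map (Polynomial.C : R →+* Polynomial R)
      · exact (h1 (b i - a i)).map (Polynomial.C : R →+* Polynomial R)
    | mul y z hy hz => rw [map_mul]; exact hy.mul_right hz
    | add y z hy hz => rw [map_add]; exact hy.add_right hz
  let ψ : D ⊗[k] FreeAlgebra k (Fin g) →ₐ[k] Polynomial R :=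
    Algebra.TensorProduct.lift f₁ f₂ hcomm
  -- scalar evaluation as an algebra hom
  let E : k → (Polynomial R →ₐ[k] R) := fun t =>
    { Polynomial.eval₂RingHom' (RingHom.id R) (algebraMap k R t)
        (fun r => (Algebra.commutes t r).symm) with
      commutes' := fun r => by
        simp [Polynomial.algebraMap_apply]
        exact Polynomial.eval₂_C _ _ }
  have hE : ∀ t (q : Polynomial R),
      E t q = Polynomial.eval₂ (RingHom.id R) (algebraMap k R t) q := fun _ _ => rfl
  -- the key identity
  have key : ∀ t : k, ∀ p : D ⊗[k] FreeAlgebra k (Fin g),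
      E t (ψ p) = Algebra.TensorProduct.map (AlgHom.id k D)
        (FreeAlgebra.lift k (fun i => a i + t • (b i - a i))) p := by
    intro t
    have hcomp : (E t).comp ψ = Algebra.TensorProduct.map (AlgHom.id k D)
        (FreeAlgebra.lift k (fun i => a i + t • (b i - a i))) := by
      apply Algebra.TensorProduct.ext
      · apply AlgHom.ext
        intro d
        simp only [AlgHom.comp_apply, Algebra.TensorProduct.includeLeft_apply]
        have h1 : ψ (d ⊗ₜ[k] (1 : FreeAlgebra k (Fin g))) = Polynomial.C ((d ⊗ₜ[k] (1 : A)) : R) := by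
          rw [show ψ (d ⊗ₜ[k] (1 : FreeAlgebra k (Fin g))) = f₁ d * f₂ 1 from
            Algebra.TensorProduct.lift_tmul _ _ _ _ _, map_one, mul_one]
          rfl
        rw [h1, hE, Polynomial.eval₂_C, Algebra.TensorProduct.map_tmul, map_one]
        rfl
      · apply FreeAlgebra.hom_ext
        funext i
        simp only [Function.comp_apply, AlgHom.coe_comp, AlgHom.coe_restrictScalars',
          Algebra.TensorProduct.includeRight_apply]
        have h1 : ψ ((1 : D) ⊗ₜ[k] FreeAlgebra.ι k i) = u i := by
          rw [show ψ ((1 : D) ⊗ₜ[k] FreeAlgebra.ι k i) = f₁ 1 * f₂ (FreeAlgebra.ι k i) from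
            Algebra.TensorProduct.lift_tmul _ _ _ _ _, map_one, one_mul]
          exact FreeAlgebra.lift_ι_apply u i
        rw [h1, hE]
        show Polynomial.eval₂ _ _
          (Polynomial.C ((1 : D) ⊗ₜ[k] a i) + Polynomial.C ((1 : D) ⊗ₜ[k] (b i - a i)) * Polynomial.X) = _
        rw [Polynomial.eval₂_add, Polynomial.eval₂_mul_X, Polynomial.eval₂_C, Polynomial.eval₂_C,
          RingHom.id_apply, RingHom.id_apply]
        have h2 : ((1 : D) ⊗ₜ[k] (b i - a i) : R) * algebraMap k R t
            = (1 : D) ⊗ₜ[k] (t • (b i - a i)) := by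
          rw [← Algebra.commutes, ← Algebra.smul_def, TensorProduct.tmul_smul]
        rw [h2, Algebra.TensorProduct.map_tmul, AlgHom.id_apply, FreeAlgebra.lift_ι_apply,
          TensorProduct.tmul_add]
    intro p
    exact AlgHom.congr_fun hcomp p
  -- the product polynomial vanishes
  have hprod : ψ p₁ * ψ p₂ = 0 := by
    have hz : ∀ t : k, Polynomial.eval₂ (RingHom.id R) (algebraMap k R t) (ψ p₁ * ψ p₂) = 0 := by
      intro t
      rw [← hE, map_mul, key t p₁, key t p₂]
      exact h _
    exact aux_poly_eval_zero _ hz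
  rcases mul_eq_zero.mp hprod with h1 | h2
  · apply ha
    have h0 := key 0 p₁
    rw [h1, map_zero] at h0
    have : (fun i => a i + (0 : k) • (b i - a i)) = a := by
      funext i; simp
    rw [this] at h0
    exact h0.symm
  · apply hb
    have h0 := key 1 p₂
    rw [h2, map_zero] at h0
    have : (fun i => a i + (1 : k) • (b i - a i)) = b := by
      funext i; simp
    rw [this] at h0
    exact h0.symm
end

section
/- Let k be a field of characteristic 0, D a division ring that is a k-algebra, and m, g ∈ ℕ. Let k[ξ] be the commutative polynomial ring over k in indeterminates ξ_{iαβ} (1 ≤ i ≤ g, 1 ≤ α,β ≤ m), let z_i ∈ Mat_m(k[ξ]) be the generic matrix with (α,β) entry ξ_{iαβ}, and let GM_m(z) be the unital k-subalgebra of Mat_m(k[ξ]) generated by z_1,…,z_g. Then D ⊗_k GM_m(z) is a domain: it is nontrivial, and for all u, v ∈ D ⊗_k GM_m(z), u·v = 0 implies u = 0 or v = 0. -/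
open scoped TensorProduct

set_option synthInstance.maxHeartbeats 1000000
set_option maxHeartbeats 1000000

/-- The generic `m × m` matrix `z_i`, with `(α,β)` entry the indeterminate `ξ_{iαβ}`. -/
noncomputable def genericMatrix (k : Type*) [Field k] (g m : ℕ) (i : Fin g) :
    Matrix (Fin m) (Fin m) (MvPolynomial (Fin g × Fin m × Fin m) k) :=
  Matrix.of fun α β => MvPolynomial.X (i, α, β)

/-- The algebra `GM_m(z)` of `g` generic `m × m` matrices over `k`: the unital
`k`-subalgebra of `Mat_m(k[ξ])` generated by `z_1, …, z_g`. -/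
noncomputable def genericMatrixAlgebra (k : Type*) [Field k] (g m : ℕ) :
    Subalgebra k (Matrix (Fin m) (Fin m) (MvPolynomial (Fin g × Fin m × Fin m) k)) :=
  Algebra.adjoin k (Set.range (genericMatrix k g m))

set_option linter.unusedSectionVars false

open Pointwise

open scoped Fin.NatCast Fin.IntCast Fin.CommRing

namespace TGMAux

variable (k : Type*) [Field k] (g m : ℕ) [NeZero m]

abbrev V := Fin g × Fin m × Fin m

abbrev Rr := MvPolynomial (V g m) k

abbrev Ss := Polynomial (Rr k g m)

/-- cyclic shift of the third index -/
def cyc : V g m ≃ V g m :=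
  (Equiv.refl (Fin g)).prodCongr ((Equiv.refl (Fin m)).prodCongr (Equiv.addRight (1 : Fin m)))

noncomputable def sig : Rr k g m ≃ₐ[k] Rr k g m :=
  MvPolynomial.renameEquiv k (cyc g m)

lemma sig_apply_X (v : V g m) :
    sig k g m (MvPolynomial.X v) = MvPolynomial.X (v.1, v.2.1, v.2.2 + 1) := by
  simp [sig, cyc, MvPolynomial.renameEquiv]
  rfl

lemma sig_pow_apply_X (j : ℕ) : ∀ (v : V g m),
    ((sig k g m ^ j : _ ≃ₐ[k] _)) (MvPolynomial.X v)
      = MvPolynomial.X (v.1, v.2.1, v.2.2 + (j : Fin m)) := by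
  induction j with
  | zero => intro v; simp
  | succ n ih =>
      intro v
      rw [pow_succ, AlgEquiv.mul_apply, sig_apply_X, ih (v.1, v.2.1, v.2.2 + 1)]
      have : v.2.2 + 1 + (n : Fin m) = v.2.2 + ((n + 1 : ℕ) : Fin m) := by
        push_cast; ring
      rw [this]

lemma sig_pow_m : (sig k g m ^ m : _ ≃ₐ[k] _) = 1 := by
  apply AlgEquiv.ext
  intro p
  have h : ((sig k g m ^ m : _ ≃ₐ[k] _) : Rr k g m →ₐ[k] Rr k g m) = AlgHom.id k _ := by
    apply MvPolynomial.algHom_ext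
    intro v
    simp only [AlgHom.coe_coe, AlgHom.id_apply]
    refine (show ((sig k g m ^ m : _ ≃ₐ[k] _) : Rr k g m → Rr k g m) (MvPolynomial.X v)
        = MvPolynomial.X (v.1, v.2.1, v.2.2 + (m : Fin m)) from sig_pow_apply_X k g m m v).trans ?_
    simp [Fin.natCast_self]
  simpa using DFunLike.congr_fun h p

lemma sig_pow_modEq {a b : ℕ} (h : a ≡ b [MOD m]) :
    (sig k g m ^ a : _ ≃ₐ[k] _) = sig k g m ^ b := by
  have key : ∀ c : ℕ, (sig k g m ^ c : _ ≃ₐ[k] _) = sig k g m ^ (c % m) := by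
    intro c
    conv_lhs => rw [← Nat.mod_add_div c m, pow_add, pow_mul, sig_pow_m, one_pow, mul_one]
  rw [key a, key b, h]

/-- main modular-arithmetic fact -/
lemma fin_arith {α β : Fin m} {N : ℕ} (h : β + (N : Fin m) = α) :
    (α : ℕ) ≤ N + (β : ℕ) ∧ m * ((N + (β : ℕ) - (α : ℕ)) / m) = N + (β : ℕ) - (α : ℕ) := by
  have hv : ((β : ℕ) + N % m) % m = (α : ℕ) := by
    rw [← h, Fin.add_def, Fin.val_natCast]
  have h5 : (α : ℕ) ≤ (β : ℕ) + N % m := hv ▸ Nat.mod_le _ _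
  have h6 : N % m ≤ N := Nat.mod_le N m
  have hle : (α : ℕ) ≤ N + (β : ℕ) := by omega
  have hmod : N + (β : ℕ) ≡ (α : ℕ) [MOD m] := by
    calc N + (β : ℕ) ≡ N % m + (β : ℕ) [MOD m] := ((Nat.mod_modEq N m).symm.add_right _)
    _ = (β : ℕ) + N % m := by ring
    _ ≡ ((β : ℕ) + N % m) % m [MOD m] := (Nat.mod_modEq _ m).symm
    _ = (α : ℕ) := hv
  have hdvd : m ∣ N + (β : ℕ) - (α : ℕ) := (Nat.modEq_iff_dvd' hle).mp hmod.symm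
  exact ⟨hle, Nat.mul_div_cancel' hdvd⟩

/-- exponent of `s` in the twisted matrix -/
def expo (N : ℕ) (α β : Fin m) : ℕ := (N + (β : ℕ) - (α : ℕ)) / m

/-- the twist exponent -/
def tw (α : Fin m) : ℕ := (m - (α : ℕ)) % m

lemma tw_neg (α : Fin m) : ((tw m α : ℕ) : Fin m) = -α := by
  have h1 : ((-α : Fin m) : ℕ) = (m - (α : ℕ)) % m := rfl
  have h2 : ((tw m α : ℕ) : Fin m) = (((-α : Fin m) : ℕ) : Fin m) := by
    rw [tw, ← h1]
  rw [h2, Fin.cast_val_eq_self]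

/-- twist congruence used in the multiplication law -/
lemma tw_modEq {α β : Fin m} {N : ℕ} (h : β + (N : Fin m) = α) :
    tw m β ≡ tw m α + N [MOD m] := by
  have hv : ((β : ℕ) + N % m) % m = (α : ℕ) := by
    rw [← h, Fin.add_def, Fin.val_natCast]
  have ha : (α : ℕ) ≤ m := le_of_lt α.isLt
  have hb : (β : ℕ) ≤ m := le_of_lt β.isLt
  have main : (α : ℕ) ≡ (β : ℕ) + N [MOD m] := by
    calc (α : ℕ) = ((β : ℕ) + N % m) % m := hv.symm
    _ ≡ (β : ℕ) + N % m [MOD m] := Nat.mod_modEq _ m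
    _ ≡ (β : ℕ) + N [MOD m] := Nat.ModEq.add_left _ (Nat.mod_modEq N m)
  have core : m - (β : ℕ) ≡ (m - (α : ℕ)) + N [MOD m] := by
    apply Nat.ModEq.add_right_cancel' ((β : ℕ) + (α : ℕ))
    have l1 : m - (β : ℕ) + ((β : ℕ) + (α : ℕ)) = m + (α : ℕ) := by omega
    have l2 : m - (α : ℕ) + N + ((β : ℕ) + (α : ℕ)) = m + ((β : ℕ) + N) := by omega
    rw [l1, l2]
    exact Nat.ModEq.add_left m main
  calc tw m β ≡ m - (β : ℕ) [MOD m] := Nat.mod_modEq _ m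
  _ ≡ (m - (α : ℕ)) + N [MOD m] := core
  _ ≡ (m - (α : ℕ)) % m + N [MOD m] := Nat.ModEq.add_right N (Nat.mod_modEq _ m).symm
  _ = tw m α + N := rfl

/-- The basic twisted matrix `U_N(r)`. -/
noncomputable def matU (N : ℕ) : Rr k g m →ₗ[k] Matrix (Fin m) (Fin m) (Ss k g m) where
  toFun r := Matrix.of fun α β =>
    if β + (N : Fin m) = α then
      Polynomial.C ((sig k g m ^ tw m α : _ ≃ₐ[k] _) r) * Polynomial.X ^ expo m N α β
    else 0
  map_add' r r' := by
    ext α β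
    simp only [Matrix.of_apply, Matrix.add_apply, map_add]
    split_ifs <;> simp [add_mul]
  map_smul' c r := by
    ext α β
    simp only [Matrix.of_apply, Matrix.smul_apply, RingHom.id_apply, map_smul]
    split_ifs <;> simp [smul_mul_assoc]

lemma matU_apply (N : ℕ) (r : Rr k g m) (α β : Fin m) :
    matU k g m N r α β =
      if β + (N : Fin m) = α then
        Polynomial.C ((sig k g m ^ tw m α : _ ≃ₐ[k] _) r) * Polynomial.X ^ expo m N α β
      else 0 := rfl

lemma matU_one : matU k g m 0 1 = 1 := by
  ext α β : 1
  rw [matU_apply]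
  simp only [Nat.cast_zero, add_zero, expo, Nat.zero_add, map_one]
  by_cases h : β = α
  · subst h
    simp [Nat.sub_self, Matrix.one_apply]
  · simp [h, Matrix.one_apply, Ne.symm h]

lemma matU_mul (N N' : ℕ) (r r' : Rr k g m) :
    matU k g m N r * matU k g m N' r' =
      matU k g m (N + N') (r * (sig k g m ^ N : _ ≃ₐ[k] _) r') := by
  ext α γ : 1
  rw [Matrix.mul_apply, matU_apply]
  by_cases hc : γ + ((N + N' : ℕ) : Fin m) = α
  · have hβ : (α - (N : Fin m)) + (N : Fin m) = α := by ring
    have hγβ : γ + (N' : Fin m) = α - (N : Fin m) := by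
      push_cast at hc
      rw [eq_sub_iff_add_eq, ← hc]
      ring
    rw [if_pos hc]
    rw [Finset.sum_eq_single (α - (N : Fin m))]
    · rw [matU_apply, matU_apply, if_pos hβ, if_pos hγβ]
      have e1 := fin_arith (m := m) hβ
      have e2 := fin_arith (m := m) hγβ
      have e3 := fin_arith (m := m) hc
      have hexp : expo m N α (α - (N : Fin m)) + expo m N' (α - (N : Fin m)) γ
          = expo m (N + N') α γ := by
        have hmul : m * (expo m N α (α - (N : Fin m)) + expo m N' (α - (N : Fin m)) γ)
            = m * expo m (N + N') α γ := by
          unfold expo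
          rw [mul_add, e1.2, e2.2, e3.2]
          omega
        exact Nat.eq_of_mul_eq_mul_left (Nat.pos_of_ne_zero (NeZero.ne m)) hmul
      have htw : (sig k g m ^ tw m (α - (N : Fin m)) : _ ≃ₐ[k] _) r'
          = (sig k g m ^ tw m α : _ ≃ₐ[k] _) ((sig k g m ^ N : _ ≃ₐ[k] _) r') := by
        rw [← AlgEquiv.mul_apply, ← pow_add]
        exact DFunLike.congr_fun (sig_pow_modEq k g m (tw_modEq (m := m) hβ)) r'
      rw [htw, map_mul, mul_mul_mul_comm, ← pow_add, hexp, Polynomial.C_mul]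
    · intro b _ hb
      rw [matU_apply, if_neg, zero_mul]
      intro hbad
      apply hb
      rw [← hbad]
      ring
    · intro h
      exact absurd (Finset.mem_univ _) h
  · rw [if_neg hc]
    apply Finset.sum_eq_zero
    intro b _
    rw [matU_apply, matU_apply]
    by_cases h1 : b + (N : Fin m) = α
    · rw [if_pos h1, if_neg, mul_zero]
      intro h2
      apply hc
      rw [← h1, ← h2]
      push_cast
      ring
    · rw [if_neg h1, zero_mul]


variable (D : Type*) [DivisionRing D] [Algebra k D]

abbrev Bb := D ⊗[k] Rr k g m
abbrev Yy := D ⊗[k] Matrix (Fin m) (Fin m) (Ss k g m)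

noncomputable def Wn (N : ℕ) : Bb k g m D →ₗ[k] Yy k g m D :=
  LinearMap.lTensor D (matU k g m N)

noncomputable def sigB (N : ℕ) : Bb k g m D →ₐ[k] Bb k g m D :=
  Algebra.TensorProduct.map (AlgHom.id k D) ((sig k g m ^ N : _ ≃ₐ[k] _) : Rr k g m →ₐ[k] Rr k g m)

lemma sigB_tmul (N : ℕ) (d : D) (r : Rr k g m) :
    sigB k g m D N (d ⊗ₜ[k] r) = d ⊗ₜ[k] (sig k g m ^ N : _ ≃ₐ[k] _) r := rfl

lemma sigB_injective (N : ℕ) : Function.Injective (sigB k g m D N) := by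
  have key : (Algebra.TensorProduct.map (AlgHom.id k D)
      (((sig k g m ^ N : _ ≃ₐ[k] _).symm : Rr k g m →ₐ[k] Rr k g m))).comp
      (sigB k g m D N) = AlgHom.id k _ := by
    rw [sigB, ← Algebra.TensorProduct.map_comp]
    have h1 : (AlgHom.id k D).comp (AlgHom.id k D) = AlgHom.id k D := rfl
    have h2 : (((sig k g m ^ N : _ ≃ₐ[k] _).symm : Rr k g m →ₐ[k] Rr k g m)).comp
        ((sig k g m ^ N : _ ≃ₐ[k] _) : Rr k g m →ₐ[k] Rr k g m) = AlgHom.id k _ := by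
      apply AlgHom.ext
      intro x
      simp
    rw [h1, h2, Algebra.TensorProduct.map_id]
  intro a b hab
  have := congrArg (Algebra.TensorProduct.map (AlgHom.id k D)
      (((sig k g m ^ N : _ ≃ₐ[k] _).symm : Rr k g m →ₐ[k] Rr k g m))) hab
  rwa [← AlgHom.comp_apply, ← AlgHom.comp_apply, key, AlgHom.id_apply, AlgHom.id_apply] at this

lemma Wn_tmul (N : ℕ) (d : D) (r : Rr k g m) :
    Wn k g m D N (d ⊗ₜ[k] r) = d ⊗ₜ[k] matU k g m N r := rfl

lemma Wn_one : Wn k g m D 0 1 = 1 := by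
  rw [Algebra.TensorProduct.one_def, Wn_tmul, matU_one, Algebra.TensorProduct.one_def]

lemma Wn_mul (N N' : ℕ) (b b' : Bb k g m D) :
    Wn k g m D N b * Wn k g m D N' b' = Wn k g m D (N + N') (b * sigB k g m D N b') := by
  induction b using TensorProduct.induction_on with
  | zero => simp
  | tmul d r =>
      induction b' using TensorProduct.induction_on with
      | zero => simp
      | tmul e t =>
          rw [Wn_tmul, Wn_tmul, sigB_tmul, Algebra.TensorProduct.tmul_mul_tmul,
            Algebra.TensorProduct.tmul_mul_tmul, Wn_tmul, matU_mul]
      | add x y hx hy =>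
          rw [map_add, mul_add, hx, hy, map_add, mul_add, map_add]
  | add x y hx hy =>
      rw [map_add, add_mul, hx, hy, add_mul, map_add]

/-- extraction of the `N`-th coefficient from a twisted matrix -/
noncomputable def pEx (N : ℕ) : Matrix (Fin m) (Fin m) (Ss k g m) →ₗ[k] Rr k g m where
  toFun x := Polynomial.coeff (x 0 ((0 : Fin m) - (N : Fin m)))
    (expo m N 0 ((0 : Fin m) - (N : Fin m)))
  map_add' x y := by simp
  map_smul' c x := by simp

lemma pEx_matU (N M : ℕ) (r : Rr k g m) :
    pEx k g m N (matU k g m M r) = if N = M then r else 0 := by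
  have tw0 : tw m (0 : Fin m) = 0 := by
    simp [tw]
  by_cases h : N = M
  · subst h
    have hcond : ((0 : Fin m) - (N : Fin m)) + (N : Fin m) = 0 := by ring
    rw [if_pos rfl]
    show Polynomial.coeff (matU k g m N r 0 _) _ = r
    rw [matU_apply, if_pos hcond, tw0, pow_zero, AlgEquiv.one_apply,
      Polynomial.coeff_C_mul, Polynomial.coeff_X_pow, if_pos rfl, mul_one]
  · rw [if_neg h]
    show Polynomial.coeff (matU k g m M r 0 _) _ = 0
    rw [matU_apply]
    by_cases hcond : ((0 : Fin m) - (N : Fin m)) + (M : Fin m) = 0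
    · rw [if_pos hcond, tw0, pow_zero, AlgEquiv.one_apply, Polynomial.coeff_C_mul,
        Polynomial.coeff_X_pow]
      have hN : ((0 : Fin m) - (N : Fin m)) + (N : Fin m) = 0 := by ring
      have eN := fin_arith (m := m) hN
      have eM := fin_arith (m := m) hcond
      rw [if_neg, mul_zero]
      intro heq
      apply h
      have : m * expo m M 0 ((0 : Fin m) - (N : Fin m))
          = m * expo m N 0 ((0 : Fin m) - (N : Fin m)) := by rw [heq]
      unfold expo at this
      rw [eN.2, eM.2] at this
      simp only [Fin.val_zero] at this eN eM
      omega
    · rw [if_neg hcond, Polynomial.coeff_zero]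

noncomputable def pcoef (N : ℕ) : Yy k g m D →ₗ[k] Bb k g m D :=
  LinearMap.lTensor D (pEx k g m N)

lemma pcoef_comp_Wn (N M : ℕ) :
    (pcoef k g m D N).comp (Wn k g m D M)
      = if N = M then LinearMap.id else 0 := by
  rw [pcoef, Wn, ← LinearMap.lTensor_comp]
  have h : (pEx k g m N).comp (matU k g m M)
      = if N = M then LinearMap.id else (0 : Rr k g m →ₗ[k] Rr k g m) := by
    apply LinearMap.ext
    intro r
    rw [LinearMap.comp_apply, pEx_matU]
    split_ifs <;> rfl
  rw [h]
  split_ifs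
  · exact LinearMap.lTensor_id D _
  · exact LinearMap.lTensor_zero D

lemma pcoef_Wn (N M : ℕ) (b : Bb k g m D) :
    pcoef k g m D N (Wn k g m D M b) = if N = M then b else 0 := by
  have := DFunLike.congr_fun (pcoef_comp_Wn k g m D N M) b
  rw [LinearMap.comp_apply] at this
  rw [this]
  split_ifs <;> rfl

-- CHUNK 3 : Bb is a domain; Umod and its leading coefficient theory
noncomputable def gX : Rr k g m →ₐ[k] AddMonoidAlgebra D (V g m →₀ ℕ) :=
  AddMonoidAlgebra.liftNCAlgHom (Algebra.ofId k _) (AddMonoidAlgebra.of D (V g m →₀ ℕ))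
    (fun _ _ => Algebra.commutes _ _)

lemma gX_monomial (μ : V g m →₀ ℕ) (c : k) :
    gX k g m D (MvPolynomial.monomial μ c)
      = AddMonoidAlgebra.single μ (algebraMap k D c) := by
  show AddMonoidAlgebra.liftNC _ _ (AddMonoidAlgebra.single μ c) = _
  rw [AddMonoidAlgebra.liftNC_single]
  show (algebraMap k (AddMonoidAlgebra D (V g m →₀ ℕ)) c) * AddMonoidAlgebra.single μ 1 = _
  rw [AddMonoidAlgebra.coe_algebraMap]
  show AddMonoidAlgebra.single 0 (algebraMap k D c) * AddMonoidAlgebra.single μ 1 = _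
  rw [AddMonoidAlgebra.single_mul_single, zero_add, mul_one]

lemma single_commute (d : D) (μ : V g m →₀ ℕ) (c : k) :
    Commute (AddMonoidAlgebra.single (0 : V g m →₀ ℕ) d)
      (AddMonoidAlgebra.single μ (algebraMap k D c)) := by
  show _ * _ = _ * _
  rw [AddMonoidAlgebra.single_mul_single, AddMonoidAlgebra.single_mul_single,
    zero_add, add_zero]
  congr 1
  exact (Algebra.commutes c d).symm

noncomputable def phiB : Bb k g m D →ₐ[k] AddMonoidAlgebra D (V g m →₀ ℕ) :=
  Algebra.TensorProduct.lift
    (AddMonoidAlgebra.singleZeroAlgHom)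
    (gX k g m D)
    (by
      intro d r
      show Commute (AddMonoidAlgebra.single 0 d) _
      induction r using MvPolynomial.induction_on' with
      | monomial μ c => rw [gX_monomial]; exact single_commute k g m D d μ c
      | add p q hp hq => rw [map_add]; exact Commute.add_right hp hq)

lemma phiB_tmul_monomial (d : D) (μ : V g m →₀ ℕ) (c : k) :
    phiB k g m D (d ⊗ₜ[k] (MvPolynomial.monomial μ c : Rr k g m))
      = AddMonoidAlgebra.single μ (c • d) := by
  rw [phiB, Algebra.TensorProduct.lift_tmul, gX_monomial]
  show AddMonoidAlgebra.single 0 d * _ = _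
  rw [AddMonoidAlgebra.single_mul_single, zero_add]
  congr 1
  rw [Algebra.smul_def]
  exact (Algebra.commutes c d).symm

noncomputable def fSR : Bb k g m D ≃ₗ[k] ((V g m →₀ ℕ) →₀ D) :=
  TensorProduct.congr (LinearEquiv.refl k D)
    (AddMonoidAlgebra.coeffLinearEquiv k : Rr k g m ≃ₗ[k] ((V g m →₀ ℕ) →₀ k)) ≪≫ₗ
  TensorProduct.finsuppScalarRight k k D (V g m →₀ ℕ)

lemma phiB_injective : Function.Injective (phiB k g m D) := by
  classical
  have key : ∀ x : Bb k g m D, (phiB k g m D x).coeff = fSR k g m D x := by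
    intro x
    induction x using TensorProduct.induction_on with
    | zero => rw [map_zero, map_zero]; rfl
    | tmul d r =>
      induction r using MvPolynomial.induction_on' with
      | monomial μ c =>
          rw [phiB_tmul_monomial, AddMonoidAlgebra.coeff_single]
          show _ = TensorProduct.finsuppScalarRight k k D (V g m →₀ ℕ)
            (d ⊗ₜ[k] (Finsupp.single μ c : (V g m →₀ ℕ) →₀ k))
          rw [TensorProduct.finsuppScalarRight_apply_tmul,
            Finsupp.sum_single_index (by rw [zero_smul, Finsupp.single_zero])]
      | add p q hp hq =>
          rw [TensorProduct.tmul_add, map_add, map_add, AddMonoidAlgebra.coeff_add, hp, hq]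
    | add x y hx hy =>
        rw [map_add, map_add, AddMonoidAlgebra.coeff_add, hx, hy]
  intro a b hab
  have : fSR k g m D a = fSR k g m D b := by
    rw [← key, ← key, hab]
  exact (fSR k g m D).injective this

instance : NoZeroDivisors (Bb k g m D) := by
  constructor
  intro a b hab
  have h0 : phiB k g m D a * phiB k g m D b = 0 := by
    rw [← map_mul, hab, map_zero]
  rcases mul_eq_zero.mp h0 with h | h
  · left
    apply phiB_injective k g m D
    rw [h, map_zero]
  · right
    apply phiB_injective k g m D
    rw [h, map_zero]

lemma Bb_one_ne_zero : (1 : Bb k g m D) ≠ 0 := by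
  intro h
  have := congrArg (phiB k g m D) h
  rw [map_one, map_zero] at this
  exact one_ne_zero this

-- Chunk 3b: Umod
def Uset : Set (Yy k g m D) := {y | ∃ N b, y = Wn k g m D N b}

noncomputable def Umod : Submodule k (Yy k g m D) := Submodule.span k (Uset k g m D)

lemma Wn_mem (N : ℕ) (b : Bb k g m D) : Wn k g m D N b ∈ Umod k g m D :=
  Submodule.subset_span ⟨N, b, rfl⟩

lemma one_mem_Umod : (1 : Yy k g m D) ∈ Umod k g m D := by
  rw [← Wn_one k g m D]
  exact Wn_mem k g m D 0 1

lemma Umod_mul_mem {x y : Yy k g m D} (hx : x ∈ Umod k g m D) (hy : y ∈ Umod k g m D) :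
    x * y ∈ Umod k g m D := by
  have hsub : Uset k g m D * Uset k g m D ⊆ Uset k g m D := by
    rintro z ⟨a, ha, b, hb, rfl⟩
    obtain ⟨N, u, rfl⟩ := ha
    obtain ⟨M, v, rfl⟩ := hb
    exact ⟨N + M, u * sigB k g m D N v, (Wn_mul k g m D N M u v)⟩
  have h1 : x * y ∈ Umod k g m D * Umod k g m D := Submodule.mul_mem_mul hx hy
  rw [Umod, Submodule.span_mul_span] at h1
  exact Submodule.span_mono hsub h1

lemma Umod_rep {x : Yy k g m D} (hx : x ∈ Umod k g m D) :
    ∃ F : Finset ℕ, x = ∑ N ∈ F, Wn k g m D N (pcoef k g m D N x) := by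
  induction hx using Submodule.span_induction with
  | mem y hy =>
      obtain ⟨N, b, rfl⟩ := hy
      refine ⟨{N}, ?_⟩
      rw [Finset.sum_singleton, pcoef_Wn, if_pos rfl]
  | zero => exact ⟨∅, by simp⟩
  | add x y hx hy ihx ihy =>
      obtain ⟨F, hF⟩ := ihx
      obtain ⟨G, hG⟩ := ihy
      -- extend both reps to F ∪ G
      have extend : ∀ (z : Yy k g m D) (F₀ : Finset ℕ),
          z = ∑ N ∈ F₀, Wn k g m D N (pcoef k g m D N z) → F₀ ⊆ F ∪ G →
          z = ∑ N ∈ F ∪ G, Wn k g m D N (pcoef k g m D N z) := by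
        intro z F₀ hz hsub
        rw [← Finset.sum_subset hsub]
        · exact hz
        · intro N _ hN
          have h0 : pcoef k g m D N z = 0 := by
            conv_lhs => rw [hz]
            rw [map_sum]
            apply Finset.sum_eq_zero
            intro M hM
            rw [pcoef_Wn, if_neg]
            rintro rfl
            exact hN hM
          rw [h0, map_zero]
      have hF' := extend x F hF Finset.subset_union_left
      have hG' := extend y G hG Finset.subset_union_right
      refine ⟨F ∪ G, ?_⟩
      conv_lhs => rw [hF', hG']
      rw [← Finset.sum_add_distrib]
      apply Finset.sum_congr rfl
      intro N _
      rw [map_add (pcoef k g m D N) x y, map_add]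
  | smul a x hx ih =>
      obtain ⟨F, hF⟩ := ih
      refine ⟨F, ?_⟩
      conv_lhs => rw [hF]
      rw [Finset.smul_sum]
      apply Finset.sum_congr rfl
      intro N _
      rw [← map_smul, map_smul (pcoef k g m D N)]

lemma pcoef_vanish {x : Yy k g m D} {F : Finset ℕ}
    (h : x = ∑ N ∈ F, Wn k g m D N (pcoef k g m D N x)) {N0 : ℕ} (hN : N0 ∉ F) :
    pcoef k g m D N0 x = 0 := by
  conv_lhs => rw [h]
  rw [map_sum]
  apply Finset.sum_eq_zero
  intro M hM
  rw [pcoef_Wn, if_neg]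
  rintro rfl
  exact hN hM

lemma exists_leading {x : Yy k g m D} (hx : x ∈ Umod k g m D) (hx0 : x ≠ 0) :
    ∃ p, pcoef k g m D p x ≠ 0 ∧ ∀ N, N < p → pcoef k g m D N x = 0 := by
  classical
  obtain ⟨F, hF⟩ := Umod_rep k g m D hx
  set T := F.filter (fun N => pcoef k g m D N x ≠ 0) with hT
  have hTne : T.Nonempty := by
    by_contra hemp
    apply hx0
    rw [hF]
    apply Finset.sum_eq_zero
    intro N hN
    have : pcoef k g m D N x = 0 := by
      by_contra hne
      exact hemp ⟨N, Finset.mem_filter.mpr ⟨hN, hne⟩⟩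
    rw [this, map_zero]
  refine ⟨T.min' hTne, (Finset.mem_filter.mp (T.min'_mem hTne)).2, ?_⟩
  intro N hN
  by_contra hne
  have hNF : N ∈ F := by
    by_contra hNF
    exact hne (pcoef_vanish k g m D hF hNF)
  have : N ∈ T := Finset.mem_filter.mpr ⟨hNF, hne⟩
  exact absurd (T.min'_le N this) (not_le.mpr hN)

lemma leading_mul {x y : Yy k g m D} (hx : x ∈ Umod k g m D) (hy : y ∈ Umod k g m D)
    (p q : ℕ) (hxp : ∀ N, N < p → pcoef k g m D N x = 0)
    (hyq : ∀ N, N < q → pcoef k g m D N y = 0) :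
    pcoef k g m D (p + q) (x * y)
      = pcoef k g m D p x * sigB k g m D p (pcoef k g m D q y) := by
  classical
  obtain ⟨F, hF⟩ := Umod_rep k g m D hx
  obtain ⟨G, hG⟩ := Umod_rep k g m D hy
  have hxy : x * y = ∑ N ∈ F, ∑ M ∈ G,
      Wn k g m D (N + M) (pcoef k g m D N x * sigB k g m D N (pcoef k g m D M y)) := by
    conv_lhs => rw [hF, hG]
    rw [Finset.sum_mul_sum]
    apply Finset.sum_congr rfl
    intro N _
    apply Finset.sum_congr rfl
    intro M _
    rw [Wn_mul]
  rw [hxy, map_sum]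
  have hterm : ∀ N ∈ F, pcoef k g m D (p + q)
      (∑ M ∈ G, Wn k g m D (N + M) (pcoef k g m D N x * sigB k g m D N (pcoef k g m D M y)))
      = if N = p then (if q ∈ G then pcoef k g m D p x * sigB k g m D p (pcoef k g m D q y)
          else 0) else 0 := by
    intro N _
    rw [map_sum]
    by_cases h1 : N = p
    · rw [if_pos h1]
      have hterm2 : ∀ M ∈ G, pcoef k g m D (p + q)
          (Wn k g m D (N + M) (pcoef k g m D N x * sigB k g m D N (pcoef k g m D M y)))
          = if M = q then
              pcoef k g m D p x * sigB k g m D p (pcoef k g m D q y) else 0 := by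
        intro M _
        rw [pcoef_Wn]
        by_cases h2 : M = q
        · rw [if_pos h2, if_pos (by rw [h1, h2]), h1, h2]
        · rw [if_neg h2, if_neg (fun h3 => h2 (by omega))]
      rw [Finset.sum_congr rfl hterm2,
        Finset.sum_ite_eq' G q
          (fun _ => pcoef k g m D p x * sigB k g m D p (pcoef k g m D q y))]
    · rw [if_neg h1]
      apply Finset.sum_eq_zero
      intro M _
      rw [pcoef_Wn]
      by_cases h3 : p + q = N + M
      · rw [if_pos h3]
        rcases (show N < p ∨ M < q by omega) with hlt | hlt
        · rw [hxp N hlt, zero_mul]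
        · rw [hyq M hlt, map_zero, mul_zero]
      · rw [if_neg h3]
  rw [Finset.sum_congr rfl hterm,
    Finset.sum_ite_eq' F p
      (fun _ => if q ∈ G then pcoef k g m D p x * sigB k g m D p (pcoef k g m D q y) else 0)]
  by_cases hp : p ∈ F
  · rw [if_pos hp]
    by_cases hq : q ∈ G
    · rw [if_pos hq]
    · rw [if_neg hq, pcoef_vanish k g m D hG hq, map_zero, mul_zero]
  · rw [if_neg hp, pcoef_vanish k g m D hF hp, zero_mul]

-- CHUNK 4 : the evaluation point, injectivity, coordinates, and the main argument

noncomputable def genIm (i : Fin g) : Matrix (Fin m) (Fin m) (Ss k g m) :=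
  ∑ n : Fin m, matU k g m (n : ℕ) (MvPolynomial.X (i, n, 0))

noncomputable def pt : V g m → Ss k g m := fun v => genIm k g m v.1 v.2.1 v.2.2

def hEquiv : V g m ≃ V g m where
  toFun v := (v.1, v.2.1 - v.2.2, -v.2.1)
  invFun w := (w.1, -w.2.2, -w.2.2 - w.2.1)
  left_inv v := by
    obtain ⟨i, α, β⟩ := v
    show ((i, -(-α), -(-α) - (α - β)) : V g m) = (i, α, β)
    rw [neg_neg, sub_sub_cancel]
  right_inv w := by
    obtain ⟨i, n, r⟩ := w
    show ((i, -r - (-r - n), -(-r)) : V g m) = (i, n, r)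
    rw [neg_neg, sub_sub_cancel]

lemma pt_eq (v : V g m) :
    pt k g m v = Polynomial.C (MvPolynomial.X (hEquiv g m v))
      * Polynomial.X ^ expo m ((v.2.1 - v.2.2 : Fin m) : ℕ) v.2.1 v.2.2 := by
  obtain ⟨i, α, β⟩ := v
  show genIm k g m i α β = _
  rw [genIm, Matrix.sum_apply]
  rw [Finset.sum_eq_single (α - β)]
  · rw [matU_apply]
    rw [if_pos (by rw [Fin.cast_val_eq_self]; ring)]
    congr 2
    · rw [sig_pow_apply_X]
      show MvPolynomial.X (i, α - β, 0 + ((tw m α : ℕ) : Fin m)) = _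
      rw [zero_add, tw_neg]
      rfl
  · intro n _ hn
    rw [matU_apply, if_neg]
    intro hbad
    apply hn
    rw [Fin.cast_val_eq_self] at hbad
    rw [← hbad]
    ring
  · intro h
    exact absurd (Finset.mem_univ _) h

lemma aeval_pt_injective :
    Function.Injective (MvPolynomial.aeval (pt k g m) : MvPolynomial (V g m) k →ₐ[k] Ss k g m) := by
  have heps : ∃ eps : Ss k g m →ₐ[k] Rr k g m, ∀ s : Ss k g m,
      eps s = Polynomial.aeval (1 : Rr k g m) s :=
    ⟨((Polynomial.aeval (1 : Rr k g m) : Ss k g m →ₐ[Rr k g m] Rr k g m)).restrictScalars k,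
      fun s => rfl⟩
  obtain ⟨eps, heps⟩ := heps
  have hcomp : (eps.comp (MvPolynomial.aeval (pt k g m))) =
      (MvPolynomial.rename (hEquiv g m) : MvPolynomial (V g m) k →ₐ[k] MvPolynomial (V g m) k) := by
    apply MvPolynomial.algHom_ext
    intro v
    rw [AlgHom.comp_apply, MvPolynomial.aeval_X, MvPolynomial.rename_X, pt_eq, heps,
      map_mul, map_pow, Polynomial.aeval_C, Polynomial.aeval_X, one_pow, mul_one]
    rfl
  intro P Q h
  have h2 : MvPolynomial.rename (hEquiv g m) P = MvPolynomial.rename (hEquiv g m) Q := by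
    rw [← hcomp]
    simp only [AlgHom.comp_apply]
    rw [h]
  exact MvPolynomial.rename_injective _ (hEquiv g m).injective h2

noncomputable def psiM : Matrix (Fin m) (Fin m) (Rr k g m) →ₐ[k] Matrix (Fin m) (Fin m) (Ss k g m) :=
  AlgHom.mapMatrix (MvPolynomial.aeval (pt k g m))

lemma psiM_generic (i : Fin g) :
    psiM k g m (genericMatrix k g m i) = genIm k g m i := by
  ext α β : 1
  show MvPolynomial.aeval (pt k g m) (MvPolynomial.X (i, α, β)) = genIm k g m i α β
  rw [MvPolynomial.aeval_X]
  rfl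

noncomputable def Phi : (D ⊗[k] (genericMatrixAlgebra k g m)) →ₐ[k] Yy k g m D :=
  Algebra.TensorProduct.map (AlgHom.id k D)
    ((psiM k g m).comp (genericMatrixAlgebra k g m).val)

lemma Phi_tmul (d : D) (a : genericMatrixAlgebra k g m) :
    Phi k g m D (d ⊗ₜ[k] a) = d ⊗ₜ[k] (psiM k g m (a : Matrix (Fin m) (Fin m) (Rr k g m))) := rfl

lemma Phi_mem (u : D ⊗[k] (genericMatrixAlgebra k g m)) : Phi k g m D u ∈ Umod k g m D := by
  have aux : ∀ w ∈ Algebra.adjoin k (Set.range (genericMatrix k g m)), ∀ d : D,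
      (d ⊗ₜ[k] (psiM k g m w) : Yy k g m D) ∈ Umod k g m D := by
    intro w hw
    induction hw using Algebra.adjoin_induction with
    | mem x hx =>
        obtain ⟨i, rfl⟩ := hx
        intro d
        rw [psiM_generic, genIm, TensorProduct.tmul_sum]
        apply Submodule.sum_mem
        intro n _
        exact Wn_mem k g m D (n : ℕ) (d ⊗ₜ[k] MvPolynomial.X (i, n, 0))
    | algebraMap c =>
        intro d
        rw [AlgHom.commutes]
        have h1 : (algebraMap k (Matrix (Fin m) (Fin m) (Ss k g m)) c)
            = matU k g m 0 (c • 1) := by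
          rw [map_smul, matU_one, Algebra.algebraMap_eq_smul_one]
        rw [h1]
        exact Wn_mem k g m D 0 (d ⊗ₜ[k] (c • 1))
    | add x y hx hy ihx ihy =>
        intro d
        rw [map_add, TensorProduct.tmul_add]
        exact Submodule.add_mem _ (ihx d) (ihy d)
    | mul x y hx hy ihx ihy =>
        intro d
        rw [map_mul]
        have : (d ⊗ₜ[k] (psiM k g m x * psiM k g m y) : Yy k g m D)
            = (d ⊗ₜ[k] psiM k g m x) * ((1 : D) ⊗ₜ[k] psiM k g m y) := by
          rw [Algebra.TensorProduct.tmul_mul_tmul, mul_one]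
        rw [this]
        exact Umod_mul_mem k g m D (ihx d) (ihy 1)
  have hspan := TensorProduct.span_tmul_eq_top k D (genericMatrixAlgebra k g m)
  have hu : u ∈ Submodule.span k {t | ∃ d a, d ⊗ₜ a = t} := by
    rw [hspan]; exact Submodule.mem_top
  induction hu using Submodule.span_induction with
  | mem t ht =>
      obtain ⟨d, a, rfl⟩ := ht
      rw [Phi_tmul]
      exact aux (a : Matrix (Fin m) (Fin m) (Rr k g m)) a.2 d
  | zero => rw [map_zero]; exact Submodule.zero_mem _
  | add x y hx hy ihx ihy => rw [map_add]; exact Submodule.add_mem _ ihx ihy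
  | smul a x hx ih => rw [map_smul]; exact Submodule.smul_mem _ a ih

-- coordinates along a basis of D
section lam
variable (Mod : Type*) [AddCommGroup Mod] [Module k Mod]

noncomputable def lam (i : Module.Basis.ofVectorSpaceIndex k D) : (D ⊗[k] Mod) →ₗ[k] Mod :=
  TensorProduct.lift ((LinearMap.lsmul k Mod).comp ((Finsupp.lapply i).comp
    ((Module.Basis.ofVectorSpace k D).repr.toLinearMap)))

lemma lam_tmul (i : Module.Basis.ofVectorSpaceIndex k D) (d : D) (x : Mod) :
    lam k D Mod i (d ⊗ₜ[k] x) = ((Module.Basis.ofVectorSpace k D).repr d) i • x := by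
  simp [lam]

lemma lam_repr (x : D ⊗[k] Mod) (i : Module.Basis.ofVectorSpaceIndex k D)
    (j : Module.Basis.ofVectorSpaceIndex k Mod) :
    (((Module.Basis.ofVectorSpace k D).tensorProduct (Module.Basis.ofVectorSpace k Mod)).repr x) (i, j)
      = (Module.Basis.ofVectorSpace k Mod).repr (lam k D Mod i x) j := by
  induction x using TensorProduct.induction_on with
  | zero => simp
  | tmul d x0 =>
      rw [Module.Basis.tensorProduct_repr_tmul_apply, lam_tmul, map_smul]
      simp [smul_eq_mul, mul_comm]
  | add a b iha ihb =>
      rw [map_add, map_add, Finsupp.add_apply, iha, ihb, map_add, Finsupp.add_apply]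

lemma lam_exists_ne {x : D ⊗[k] Mod} (hx : x ≠ 0) :
    ∃ i, lam k D Mod i x ≠ 0 := by
  by_contra hcon
  push_neg at hcon
  apply hx
  have hrep : ((Module.Basis.ofVectorSpace k D).tensorProduct (Module.Basis.ofVectorSpace k Mod)).repr x = 0 := by
    ext ij
    obtain ⟨i, j⟩ := ij
    rw [lam_repr, hcon i, map_zero]
    rfl
  have := congrArg (((Module.Basis.ofVectorSpace k D).tensorProduct (Module.Basis.ofVectorSpace k Mod)).repr.symm) hrep
  rwa [LinearEquiv.symm_apply_apply, map_zero] at this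

end lam

lemma lam_Phi (i : Module.Basis.ofVectorSpaceIndex k D) (u : D ⊗[k] (genericMatrixAlgebra k g m)) :
    lam k D (Matrix (Fin m) (Fin m) (Ss k g m)) i (Phi k g m D u)
      = psiM k g m ((lam k D (genericMatrixAlgebra k g m) i u :
          genericMatrixAlgebra k g m) : Matrix (Fin m) (Fin m) (Rr k g m)) := by
  have key : (lam k D (Matrix (Fin m) (Fin m) (Ss k g m)) i).comp (Phi k g m D).toLinearMap
      = (((psiM k g m).comp (genericMatrixAlgebra k g m).val).toLinearMap).comp
          (lam k D (genericMatrixAlgebra k g m) i) := by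
    apply TensorProduct.ext'
    intro d a
    simp only [LinearMap.comp_apply, AlgHom.toLinearMap_apply, Phi_tmul, lam_tmul]
    rw [map_smul]
    rfl
  exact DFunLike.congr_fun key u

theorem main_statement {k : Type*} [Field k] [CharZero k]
    (D : Type*) [DivisionRing D] [Algebra k D] (g m : ℕ) (hm : 0 < m) :
    Nontrivial (D ⊗[k] (genericMatrixAlgebra k g m)) ∧
    ∀ u v : D ⊗[k] (genericMatrixAlgebra k g m), u * v = 0 → u = 0 ∨ v = 0 := by
  haveI : NeZero m := ⟨hm.ne'⟩
  have phi_ne : ∀ u : D ⊗[k] (genericMatrixAlgebra k g m), u ≠ 0 → Phi k g m D u ≠ 0 := by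
    intro u hu
    obtain ⟨i, hi⟩ := lam_exists_ne k D (genericMatrixAlgebra k g m) hu
    have hval : ((lam k D (genericMatrixAlgebra k g m) i u :
        genericMatrixAlgebra k g m) : Matrix (Fin m) (Fin m) (Rr k g m)) ≠ 0 := by
      intro h0
      apply hi
      exact Subtype.ext h0
    have hentry : ∃ α β, ((lam k D (genericMatrixAlgebra k g m) i u :
        genericMatrixAlgebra k g m) : Matrix (Fin m) (Fin m) (Rr k g m)) α β ≠ 0 := by
      by_contra hc
      push_neg at hc
      apply hval
      ext α β : 1
      exact hc α β
    obtain ⟨α, β, hab⟩ := hentry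
    intro hPhi
    have h1 := lam_Phi k g m D i u
    rw [hPhi, map_zero] at h1
    have h2 : MvPolynomial.aeval (pt k g m) (((lam k D (genericMatrixAlgebra k g m) i u :
        genericMatrixAlgebra k g m) : Matrix (Fin m) (Fin m) (Rr k g m)) α β) = 0 := by
      have := congrFun (congrFun h1.symm α) β
      exact this
    apply hab
    apply aeval_pt_injective k g m
    rw [h2, map_zero]
  constructor
  · refine ⟨1, 0, ?_⟩
    intro h
    have h1 : (1 : Yy k g m D) = 0 := by
      rw [← map_one (Phi k g m D), h, map_zero]
    have h2 : (1 : Bb k g m D) = 0 := by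
      have h3 := congrArg (pcoef k g m D 0) h1
      rw [map_zero, ← Wn_one k g m D, pcoef_Wn, if_pos rfl] at h3
      exact h3
    exact Bb_one_ne_zero k g m D h2
  · intro u v huv
    by_contra hcon
    push_neg at hcon
    obtain ⟨hu, hv⟩ := hcon
    have hPu := phi_ne u hu
    have hPv := phi_ne v hv
    obtain ⟨p, hp, hpmin⟩ := exists_leading k g m D (Phi_mem k g m D u) hPu
    obtain ⟨q, hq, hqmin⟩ := exists_leading k g m D (Phi_mem k g m D v) hPv
    have hlead := leading_mul k g m D (Phi_mem k g m D u) (Phi_mem k g m D v) p q hpmin hqmin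
    have hzero : Phi k g m D u * Phi k g m D v = 0 := by
      rw [← map_mul, huv, map_zero]
    rw [hzero, map_zero] at hlead
    have hsig : sigB k g m D p (pcoef k g m D q (Phi k g m D v)) ≠ 0 := by
      intro h0
      apply hq
      apply sigB_injective k g m D p
      rw [h0, map_zero]
    exact (mul_ne_zero hp hsig) hlead.symm


end TGMAux

/-- part of Proposition 4.4. For a division ring `D` that is a
`k`-algebra, `D ⊗_k GM_m(z)` is a domain. -/
theorem tensor_generic_matrices_is_domain {k : Type*} [Field k] [CharZero k]
    (D : Type*) [DivisionRing D] [Algebra k D] (g m : ℕ) (hm : 0 < m) :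
    Nontrivial (D ⊗[k] (genericMatrixAlgebra k g m)) ∧
    ∀ u v : D ⊗[k] (genericMatrixAlgebra k g m), u * v = 0 → u = 0 ∨ v = 0 :=
  TGMAux.main_statement D g m hm
end

section
/- Let k be a field of characteristic 0 and g ∈ ℕ. Let B be the bi-free algebra: the quotient of the free k-algebra on the 2g variables X_1,…,X_g, Y_1,…,Y_g by the two-sided ideal generated by the commutators X_i·Y_j − Y_j·X_i for all i ≠ j. Let A be the multipartite free k-algebra with g+2 parts: A = k⟨X'_1,…,X'_g⟩ ⊗_k k⟨X''_1, Y''_1⟩ ⊗_k ⋯ ⊗_k k⟨X''_g, Y''_g⟩ ⊗_k k⟨Y'_1,…,Y'_g⟩ (tensor product over k of free k-algebras). Then the assignment X_i ↦ X'_i·X''_i, Y_i ↦ Y'_i·Y''_i (products of the canonical images in A) induces a well-defined k-algebra homomorphism ϑ : B → A, and ϑ is injective. -/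
/-- Variables of the bi-free algebra: `Sum.inl i = X_i`, `Sum.inr i = Y_i`. -/
abbrev BFVar (g : ℕ) := Fin g ⊕ Fin g

/-- The defining relations of the bi-free algebra: `X_i Y_j = Y_j X_i` for `i ≠ j`. -/
inductive BFRel (k : Type*) [Field k] (g : ℕ) :
    FreeAlgebra k (BFVar g) → FreeAlgebra k (BFVar g) → Prop
  | comm (i j : Fin g) (h : i ≠ j) :
      BFRel k g (FreeAlgebra.ι k (Sum.inl i) * FreeAlgebra.ι k (Sum.inr j))
        (FreeAlgebra.ι k (Sum.inr j) * FreeAlgebra.ι k (Sum.inl i))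

/-- The bi-free algebra on `2g` variables. -/
abbrev BiFreeAlgebra (k : Type*) [Field k] (g : ℕ) := RingQuot (BFRel k g)

/-- Variables of the multipartite free algebra with `g + 2` parts:
`X'_1,…,X'_g` (first part), pairs `X''_i, Y''_i` (the `g` middle parts, `Bool` selecting
`X''` = `false` or `Y''` = `true`) and `Y'_1,…,Y'_g` (last part). -/
abbrev MPVar (g : ℕ) := Fin g ⊕ ((Fin g × Bool) ⊕ Fin g)

/-- The part (tensor factor) containing a given variable: the first part, one of the `g`
middle parts, or the last part. -/
def mpPart {g : ℕ} : MPVar g → Unit ⊕ (Fin g ⊕ Unit)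
  | .inl _ => .inl ()
  | .inr (.inl (i, _)) => .inr (.inl i)
  | .inr (.inr _) => .inr (.inr ())

/-- The defining relations of the multipartite free algebra with `g + 2` parts:
variables lying in distinct parts commute. -/
inductive MPRel (k : Type*) [Field k] (g : ℕ) :
    FreeAlgebra k (MPVar g) → FreeAlgebra k (MPVar g) → Prop
  | comm (v w : MPVar g) (h : mpPart v ≠ mpPart w) :
      MPRel k g (FreeAlgebra.ι k v * FreeAlgebra.ι k w)
        (FreeAlgebra.ι k w * FreeAlgebra.ι k v)

/-- The multipartite free algebra
`k⟨X'⟩ ⊗ k⟨X''_1,Y''_1⟩ ⊗ ⋯ ⊗ k⟨X''_g,Y''_g⟩ ⊗ k⟨Y'⟩` with `g + 2` parts. -/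
abbrev MPAlgebra (k : Type*) [Field k] (g : ℕ) := RingQuot (MPRel k g)

/-- Canonical generator of the bi-free algebra. -/
noncomputable def bfGen (k : Type*) [Field k] (g : ℕ) (v : BFVar g) : BiFreeAlgebra k g :=
  RingQuot.mkAlgHom k (BFRel k g) (FreeAlgebra.ι k v)

/-- Canonical generator of the multipartite free algebra. -/
noncomputable def mpGen (k : Type*) [Field k] (g : ℕ) (w : MPVar g) : MPAlgebra k g :=
  RingQuot.mkAlgHom k (MPRel k g) (FreeAlgebra.ι k w)

namespace BFP

variable {g : ℕ}

/-- projection to X-letters -/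
def px : List (BFVar g) → List (Fin g)
  | [] => []
  | .inl i :: t => i :: px t
  | .inr _ :: t => px t

/-- projection to Y-letters -/
def py : List (BFVar g) → List (Fin g)
  | [] => []
  | .inl _ :: t => py t
  | .inr i :: t => i :: py t

/-- projection to letters with index `i`, recording X=false, Y=true -/
def pb (i : Fin g) : List (BFVar g) → List Bool
  | [] => []
  | .inl j :: t => if j = i then false :: pb i t else pb i t
  | .inr j :: t => if j = i then true :: pb i t else pb i t

@[simp] lemma px_nil : px ([] : List (BFVar g)) = [] := rfl
@[simp] lemma py_nil : py ([] : List (BFVar g)) = [] := rfl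
@[simp] lemma pb_nil (i : Fin g) : pb i ([] : List (BFVar g)) = [] := rfl
@[simp] lemma px_inl (i : Fin g) (t) : px (.inl i :: t) = i :: px t := rfl
@[simp] lemma px_inr (i : Fin g) (t) : px (.inr i :: t) = px t := rfl
@[simp] lemma py_inl (i : Fin g) (t) : py (.inl i :: t) = py t := rfl
@[simp] lemma py_inr (i : Fin g) (t) : py (.inr i :: t) = i :: py t := rfl
lemma pb_inl (i j : Fin g) (t) :
    pb i (.inl j :: t) = if j = i then false :: pb i t else pb i t := rfl
lemma pb_inr (i j : Fin g) (t) :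
    pb i (.inr j :: t) = if j = i then true :: pb i t else pb i t := rfl

lemma px_append (u r : List (BFVar g)) : px (u ++ r) = px u ++ px r := by
  induction u with
  | nil => rfl
  | cons a t ih => cases a <;> simp [ih]

lemma py_append (u r : List (BFVar g)) : py (u ++ r) = py u ++ py r := by
  induction u with
  | nil => rfl
  | cons a t ih => cases a <;> simp [ih]

lemma pb_append (i : Fin g) (u r : List (BFVar g)) : pb i (u ++ r) = pb i u ++ pb i r := by
  induction u with
  | nil => rfl
  | cons a t ih => cases a <;> simp [pb_inl, pb_inr, ih] <;> split <;> simp [ih]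

/-- all letters of `u` are `inr j` with `j ≠ i` -/
def Xfree (i : Fin g) (u : List (BFVar g)) : Prop := ∀ b ∈ u, ∃ j, b = Sum.inr j ∧ j ≠ i
def Yfree (i : Fin g) (u : List (BFVar g)) : Prop := ∀ b ∈ u, ∃ j, b = Sum.inl j ∧ j ≠ i

lemma px_eq_nil_of_Xfree {i : Fin g} {u : List (BFVar g)} (h : Xfree i u) : px u = [] := by
  induction u with
  | nil => rfl
  | cons a t ih =>
    obtain ⟨j, rfl, -⟩ := h a (List.mem_cons_self)
    simpa using ih fun b hb => h b (List.mem_cons_of_mem _ hb)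

lemma py_eq_nil_of_Yfree {i : Fin g} {u : List (BFVar g)} (h : Yfree i u) : py u = [] := by
  induction u with
  | nil => rfl
  | cons a t ih =>
    obtain ⟨j, rfl, -⟩ := h a (List.mem_cons_self)
    simpa using ih fun b hb => h b (List.mem_cons_of_mem _ hb)

lemma pb_eq_nil_of_Xfree {i : Fin g} {u : List (BFVar g)} (h : Xfree i u) : pb i u = [] := by
  induction u with
  | nil => rfl
  | cons a t ih =>
    obtain ⟨j, rfl, hj⟩ := h a (List.mem_cons_self)
    rw [pb_inr, if_neg hj]
    exact ih fun b hb => h b (List.mem_cons_of_mem _ hb)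

lemma pb_eq_nil_of_Yfree {i : Fin g} {u : List (BFVar g)} (h : Yfree i u) : pb i u = [] := by
  induction u with
  | nil => rfl
  | cons a t ih =>
    obtain ⟨j, rfl, hj⟩ := h a (List.mem_cons_self)
    rw [pb_inl, if_neg hj]
    exact ih fun b hb => h b (List.mem_cons_of_mem _ hb)

/-- splitting lemma, X case -/
lemma split_x : ∀ (w : List (BFVar g)) (i : Fin g) (xs : List (Fin g)) (bs : List Bool),
    px w = i :: xs → pb i w = false :: bs →
    ∃ u r, w = u ++ Sum.inl i :: r ∧ Xfree i u := by
  intro w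
  induction w with
  | nil => intro i xs bs h; simp [px] at h
  | cons c t ih =>
    intro i xs bs hx hb
    match c with
    | .inl j =>
      have hj : j = i := by simpa using congrArg (fun l => l.head?) hx
      subst hj
      exact ⟨[], t, rfl, by simp [Xfree]⟩
    | .inr j =>
      by_cases hj : j = i
      · subst hj
        rw [pb_inr, if_pos rfl] at hb
        simp at hb
      · rw [pb_inr, if_neg hj] at hb
        rw [px_inr] at hx
        obtain ⟨u, r, rfl, hu⟩ := ih i xs bs hx hb
        exact ⟨Sum.inr j :: u, r, rfl, by
          intro b hb'
          rcases List.mem_cons.mp hb' with h | h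
          · exact ⟨j, h, hj⟩
          · exact hu b h⟩

/-- splitting lemma, Y case -/
lemma split_y : ∀ (w : List (BFVar g)) (i : Fin g) (xs : List (Fin g)) (bs : List Bool),
    py w = i :: xs → pb i w = true :: bs →
    ∃ u r, w = u ++ Sum.inr i :: r ∧ Yfree i u := by
  intro w
  induction w with
  | nil => intro i xs bs h; simp [py] at h
  | cons c t ih =>
    intro i xs bs hy hb
    match c with
    | .inr j =>
      have hj : j = i := by simpa using congrArg (fun l => l.head?) hy
      subst hj
      exact ⟨[], t, rfl, by simp [Yfree]⟩
    | .inl j =>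
      by_cases hj : j = i
      · subst hj
        rw [pb_inl, if_pos rfl] at hb
        simp at hb
      · rw [pb_inl, if_neg hj] at hb
        rw [py_inl] at hy
        obtain ⟨u, r, rfl, hu⟩ := ih i xs bs hy hb
        exact ⟨Sum.inl j :: u, r, rfl, by
          intro b hb'
          rcases List.mem_cons.mp hb' with h | h
          · exact ⟨j, h, hj⟩
          · exact hu b h⟩



variable {k : Type*} [Field k]

/-- product of generators of a word -/
noncomputable def F (k : Type*) [Field k] (g : ℕ) (w : List (BFVar g)) : BiFreeAlgebra k g :=
  (w.map (bfGen k g)).prod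

@[simp] lemma F_nil : F k g [] = 1 := rfl
@[simp] lemma F_cons (a : BFVar g) (t : List (BFVar g)) :
    F k g (a :: t) = bfGen k g a * F k g t := by simp [F]
lemma F_append (u r : List (BFVar g)) : F k g (u ++ r) = F k g u * F k g r := by
  simp [F]

lemma bf_comm {i j : Fin g} (h : i ≠ j) :
    bfGen k g (.inl i) * bfGen k g (.inr j) = bfGen k g (.inr j) * bfGen k g (.inl i) := by
  have := RingQuot.mkAlgHom_rel k (BFRel.comm (k := k) i j h)
  simpa [bfGen, map_mul] using this

lemma F_swap_x {i : Fin g} {u : List (BFVar g)} (hu : Xfree i u) :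
    F k g u * bfGen k g (.inl i) = bfGen k g (.inl i) * F k g u := by
  induction u with
  | nil => simp
  | cons a t ih =>
    obtain ⟨j, rfl, hj⟩ := hu a (List.mem_cons_self)
    have ht := ih fun b hb => hu b (List.mem_cons_of_mem _ hb)
    rw [F_cons, mul_assoc, ht, ← mul_assoc, ← bf_comm (Ne.symm hj), mul_assoc, ← F_cons]

lemma F_swap_y {i : Fin g} {u : List (BFVar g)} (hu : Yfree i u) :
    F k g u * bfGen k g (.inr i) = bfGen k g (.inr i) * F k g u := by
  induction u with
  | nil => simp
  | cons a t ih =>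
    obtain ⟨j, rfl, hj⟩ := hu a (List.mem_cons_self)
    have ht := ih fun b hb => hu b (List.mem_cons_of_mem _ hb)
    rw [F_cons, mul_assoc, ht, ← mul_assoc, bf_comm hj, mul_assoc, ← F_cons]

/-- **Projection lemma**: words with equal projections define the same element of the
bi-free algebra. -/
lemma key (g : ℕ) : ∀ w₁ w₂ : List (BFVar g), px w₁ = px w₂ → py w₁ = py w₂ →
    (∀ i, pb i w₁ = pb i w₂) → F k g w₁ = F k g w₂ := by
  intro w₁
  induction w₁ with
  | nil =>
    intro w₂ hx hy _
    match w₂ with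
    | [] => rfl
    | .inl i :: t => simp at hx
    | .inr i :: t => simp at hy
  | cons a t₁ ih =>
    intro w₂ hx hy hb
    match a with
    | .inl i =>
      have hx' : px w₂ = i :: px t₁ := by simpa using hx.symm
      have hb' : pb i w₂ = false :: pb i t₁ := by
        have := (hb i).symm
        rwa [pb_inl, if_pos rfl] at this
      obtain ⟨u, r, rfl, hu⟩ := split_x w₂ i _ _ hx' hb'
      have hpxu := px_eq_nil_of_Xfree hu
      have hpbu := pb_eq_nil_of_Xfree hu
      rw [px_append, hpxu, List.nil_append, px_inl] at hx'
      rw [pb_append, hpbu, List.nil_append, pb_inl, if_pos rfl] at hb'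
      have h1 : px (u ++ r) = px t₁ := by
        rw [px_append, hpxu, List.nil_append]
        exact List.cons_injective hx' 
      have h2 : py (u ++ r) = py t₁ := by
        have := hy
        rw [py_inl, py_append, py_inl] at this
        rw [py_append]
        exact this.symm
      have h3 : ∀ l, pb l (u ++ r) = pb l t₁ := by
        intro l
        by_cases hl : l = i
        · subst hl
          rw [pb_append, hpbu, List.nil_append]
          exact List.cons_injective hb' 
        · have := hb l
          rw [pb_inl, if_neg (fun h => hl h.symm), pb_append, pb_inl,
            if_neg (fun h => hl h.symm)] at this
          rw [pb_append]
          exact this.symm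
      have hIH : F k g t₁ = F k g (u ++ r) :=
        ih (u ++ r) h1.symm h2.symm (fun l => (h3 l).symm)
      have hkey : F k g (u ++ Sum.inl i :: r) = bfGen k g (.inl i) * F k g (u ++ r) := by
        rw [F_append, F_cons, ← mul_assoc, F_swap_x hu, mul_assoc, ← F_append]
      rw [F_cons, hIH, ← hkey]
    | .inr i =>
      have hy' : py w₂ = i :: py t₁ := by simpa using hy.symm
      have hb' : pb i w₂ = true :: pb i t₁ := by
        have := (hb i).symm
        rwa [pb_inr, if_pos rfl] at this
      obtain ⟨u, r, rfl, hu⟩ := split_y w₂ i _ _ hy' hb'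
      have hpyu := py_eq_nil_of_Yfree hu
      have hpbu := pb_eq_nil_of_Yfree hu
      rw [py_append, hpyu, List.nil_append, py_inr] at hy'
      rw [pb_append, hpbu, List.nil_append, pb_inr, if_pos rfl] at hb'
      have h1 : py (u ++ r) = py t₁ := by
        rw [py_append, hpyu, List.nil_append]
        exact List.cons_injective hy' 
      have h2 : px (u ++ r) = px t₁ := by
        have := hx
        rw [px_inr, px_append, px_inr] at this
        rw [px_append]
        exact this.symm
      have h3 : ∀ l, pb l (u ++ r) = pb l t₁ := by
        intro l
        by_cases hl : l = i
        · subst hl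
          rw [pb_append, hpbu, List.nil_append]
          exact List.cons_injective hb' 
        · have := hb l
          rw [pb_inr, if_neg (fun h => hl h.symm), pb_append, pb_inr,
            if_neg (fun h => hl h.symm)] at this
          rw [pb_append]
          exact this.symm
      have hIH : F k g t₁ = F k g (u ++ r) :=
        ih (u ++ r) h2.symm h1.symm (fun l => (h3 l).symm)
      have hkey : F k g (u ++ Sum.inr i :: r) = bfGen k g (.inr i) * F k g (u ++ r) := by
        rw [F_append, F_cons, ← mul_assoc, F_swap_y hu, mul_assoc, ← F_append]
      rw [F_cons, hIH, ← hkey]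

/-! ### The concrete target monoid -/

abbrev P (g : ℕ) := FreeMonoid (Fin g) × (Fin g → FreeMonoid Bool) × FreeMonoid (Fin g)

/-- delta function into the middle component -/
def dmid (i : Fin g) (b : Bool) : Fin g → FreeMonoid Bool :=
  fun j => if j = i then FreeMonoid.of b else 1

def ιP : BFVar g → P g
  | .inl i => (FreeMonoid.of i, dmid i false, 1)
  | .inr i => (1, dmid i true, FreeMonoid.of i)

noncomputable def πh (g : ℕ) : FreeMonoid (BFVar g) →* P g := FreeMonoid.lift ιP

lemma dmid_comm {i j : Fin g} (b b' : Bool) (h : i ≠ j) :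
    dmid i b * dmid j b' = dmid j b' * dmid i b := by
  funext l
  simp only [Pi.mul_apply, dmid]
  by_cases hi : l = i <;> by_cases hj : l = j
  · exact absurd (hi.symm.trans hj) h
  all_goals simp [hi, hj, h, h.symm, Ne.symm h]

lemma ιP_comm {i j : Fin g} (h : i ≠ j) :
    ιP (Sum.inl i) * ιP (Sum.inr j) = ιP (Sum.inr j) * ιP (Sum.inl i) := by
  simp only [ιP, Prod.mk_mul_mk]
  refine Prod.ext (by simp) (Prod.ext ?_ (by simp))
  exact dmid_comm _ _ h

/-- computation of `πh` in terms of list projections -/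
lemma πh_apply (g : ℕ) (w : List (BFVar g)) :
    πh g (FreeMonoid.ofList w) =
      (FreeMonoid.ofList (px w), fun i => FreeMonoid.ofList (pb i w),
        FreeMonoid.ofList (py w)) := by
  induction w with
  | nil => rfl
  | cons a t ih =>
    rw [FreeMonoid.ofList_cons, map_mul, ih]
    have hπ : πh g (FreeMonoid.of a) = ιP a := rfl
    rw [hπ]
    match a with
    | .inl i =>
      simp only [ιP, Prod.mk_mul_mk]
      refine Prod.ext ?_ (Prod.ext ?_ ?_)
      · show FreeMonoid.of i * FreeMonoid.ofList (px t) = FreeMonoid.ofList (px (Sum.inl i :: t))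
        rw [px_inl, FreeMonoid.ofList_cons]
      · show dmid i false * (fun l => FreeMonoid.ofList (pb l t))
            = fun l => FreeMonoid.ofList (pb l (Sum.inl i :: t))
        funext l
        simp only [Pi.mul_apply, dmid, pb_inl]
        by_cases hl : l = i
        · rw [if_pos hl, if_pos hl.symm, hl, FreeMonoid.ofList_cons]
        · rw [if_neg hl, if_neg (fun hh => hl hh.symm), one_mul]
      · show (1 : FreeMonoid (Fin g)) * FreeMonoid.ofList (py t)
            = FreeMonoid.ofList (py (Sum.inl i :: t))
        rw [py_inl, one_mul]
    | .inr i =>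
      simp only [ιP, Prod.mk_mul_mk]
      refine Prod.ext ?_ (Prod.ext ?_ ?_)
      · show (1 : FreeMonoid (Fin g)) * FreeMonoid.ofList (px t)
            = FreeMonoid.ofList (px (Sum.inr i :: t))
        rw [px_inr, one_mul]
      · show dmid i true * (fun l => FreeMonoid.ofList (pb l t))
            = fun l => FreeMonoid.ofList (pb l (Sum.inr i :: t))
        funext l
        simp only [Pi.mul_apply, dmid, pb_inr]
        by_cases hl : l = i
        · rw [if_pos hl, if_pos hl.symm, hl, FreeMonoid.ofList_cons]
        · rw [if_neg hl, if_neg (fun hh => hl hh.symm), one_mul]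
      · show FreeMonoid.of i * FreeMonoid.ofList (py t) = FreeMonoid.ofList (py (Sum.inr i :: t))
        rw [py_inr, FreeMonoid.ofList_cons]

/-! ### Algebra plumbing -/

variable (k)

/-- the free-algebra-level map to the monoid algebra of `P` -/
noncomputable def θt (g : ℕ) : FreeAlgebra k (BFVar g) →ₐ[k] MonoidAlgebra k (P g) :=
  FreeAlgebra.lift k (fun v => MonoidAlgebra.of k (P g) (ιP v))

lemma e_ι {g : ℕ} (v : BFVar g) :
    (FreeAlgebra.equivMonoidAlgebraFreeMonoid (R := k) (X := BFVar g)) (FreeAlgebra.ι k v)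
      = MonoidAlgebra.of k (FreeMonoid (BFVar g)) (FreeMonoid.of v) := by
  show ((FreeAlgebra.equivMonoidAlgebraFreeMonoid (R := k) (X := BFVar g) :
      FreeAlgebra k (BFVar g) →ₐ[k] MonoidAlgebra k (FreeMonoid (BFVar g))))
      (FreeAlgebra.ι k v) = _
  rw [FreeAlgebra.equivMonoidAlgebraFreeMonoid, AlgEquiv.coe_algHom_ofAlgHom,
    FreeAlgebra.lift_ι_apply]

lemma θt_rel {g : ℕ} : ∀ ⦃x y : FreeAlgebra k (BFVar g)⦄, BFRel k g x y → θt k g x = θt k g y := by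
  rintro _ _ ⟨i, j, h⟩
  simp only [map_mul, θt, FreeAlgebra.lift_ι_apply]
  rw [← map_mul, ← map_mul, ιP_comm h]

/-- `θt` is `mapDomain πh` composed with the canonical equivalence. -/
lemma θt_eq (g : ℕ) :
    θt k g = (MonoidAlgebra.mapDomainAlgHom k k (πh g)).comp
      (FreeAlgebra.equivMonoidAlgebraFreeMonoid (R := k) (X := BFVar g)).toAlgHom := by
  apply FreeAlgebra.hom_ext
  funext v
  simp only [Function.comp_apply, AlgHom.coe_comp, AlgEquiv.toAlgHom_eq_coe, AlgHom.coe_coe,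
    θt, FreeAlgebra.lift_ι_apply, e_ι]
  rw [MonoidAlgebra.mapDomainAlgHom_apply]
  erw [e_ι]
  rw [MonoidAlgebra.of_apply, MonoidAlgebra.of_apply, MonoidAlgebra.mapDomain_single]
  rfl

/-- monomial in the free algebra attached to a word -/
noncomputable def wProd (g : ℕ) (w : List (BFVar g)) : FreeAlgebra k (BFVar g) :=
  (w.map (FreeAlgebra.ι k)).prod

lemma e_wProd (g : ℕ) (w : List (BFVar g)) :
    (FreeAlgebra.equivMonoidAlgebraFreeMonoid (R := k) (X := BFVar g)) (wProd k g w)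
      = MonoidAlgebra.single (FreeMonoid.ofList w) 1 := by
  induction w with
  | nil =>
    simp only [wProd, List.map_nil, List.prod_nil, map_one, FreeMonoid.ofList_nil]
    exact MonoidAlgebra.one_def
  | cons a t ih =>
    have : wProd k g (a :: t) = FreeAlgebra.ι k a * wProd k g t := by simp [wProd]
    rw [this, map_mul, ih, e_ι, MonoidAlgebra.of_apply, MonoidAlgebra.single_mul_single,
      one_mul, FreeMonoid.ofList_cons]

lemma mkB_wProd (g : ℕ) (w : List (BFVar g)) :
    RingQuot.mkAlgHom k (BFRel k g) (wProd k g w) = F k g w := by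
  rw [wProd, map_list_prod, List.map_map]
  rfl

/-- two words with the same image under `πh` give equal monomials in `B` -/
lemma F_eq_of_πh_eq {g : ℕ} {w₁ w₂ : List (BFVar g)}
    (h : πh g (FreeMonoid.ofList w₁) = πh g (FreeMonoid.ofList w₂)) : F k g w₁ = F k g w₂ := by
  rw [πh_apply, πh_apply, Prod.mk.injEq, Prod.mk.injEq] at h
  obtain ⟨h1, h2, h3⟩ := h
  refine key g w₁ w₂ ?_ ?_ ?_
  · exact congrArg FreeMonoid.toList h1
  · exact congrArg FreeMonoid.toList h3
  · intro i
    exact congrArg FreeMonoid.toList (congrFun h2 i)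

/-- the kernel lemma: anything killed by `mapDomain πh` is killed by the quotient map -/
lemma ker_lemma (g : ℕ) (z : MonoidAlgebra k (FreeMonoid (BFVar g)))
    (hz : MonoidAlgebra.mapDomain (πh g) z = 0) :
    RingQuot.mkAlgHom k (BFRel k g)
      ((FreeAlgebra.equivMonoidAlgebraFreeMonoid (R := k) (X := BFVar g)).symm z) = 0 := by
  classical
  set e := FreeAlgebra.equivMonoidAlgebraFreeMonoid (R := k) (X := BFVar g)
  set mkB := RingQuot.mkAlgHom k (BFRel k g)
  set m' : P g → BiFreeAlgebra k g := fun p =>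
    if h : ∃ w : FreeMonoid (BFVar g), πh g w = p then F k g (FreeMonoid.toList h.choose) else 0
    with hm'
  have hsingle : ∀ (w : FreeMonoid (BFVar g)) (c : k),
      mkB (e.symm (MonoidAlgebra.single w c)) = c • m' (πh g w) := by
    intro w c
    have hex : ∃ w' : FreeMonoid (BFVar g), πh g w' = πh g w := ⟨w, rfl⟩
    have h1 : e.symm (MonoidAlgebra.single w c) = c • wProd k g (FreeMonoid.toList w) := by
      apply e.injective
      rw [map_smul, e_wProd, AlgEquiv.apply_symm_apply, FreeMonoid.ofList_toList,
        MonoidAlgebra.smul_single, smul_eq_mul, mul_one]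
    have hm : m' (πh g w) = F k g (FreeMonoid.toList (Exists.choose hex)) := dif_pos hex
    have hF : F k g (FreeMonoid.toList w) = F k g (FreeMonoid.toList (Exists.choose hex)) := by
      apply F_eq_of_πh_eq
      rw [FreeMonoid.ofList_toList, FreeMonoid.ofList_toList]
      exact hex.choose_spec.symm
    rw [h1, map_smul, mkB_wProd, hm, hF]
  have hQ : mkB (e.symm z) = z.coeff.sum fun w c => c • m' (πh g w) := by
    conv_lhs => rw [← MonoidAlgebra.sum_coeff_single z]
    rw [map_finsuppSum, map_finsuppSum]
    exact Finsupp.sum_congr fun w _ => hsingle w (z.coeff w)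
  rw [hQ]
  calc (Finsupp.sum z.coeff fun w c => c • m' (πh g w))
      = (Finsupp.mapDomain (πh g) z.coeff).sum fun p c => c • m' p := by
        have := Finsupp.sum_mapDomain_index (f := ⇑(πh g)) (s := z.coeff)
          (h := fun p c => c • m' p)
          (fun p => zero_smul k (m' p)) (fun p c₁ c₂ => add_smul c₁ c₂ (m' p))
        exact this.symm
    _ = 0 := by
        rw [show Finsupp.mapDomain (πh g) z.coeff = 0 from congrArg MonoidAlgebra.coeff hz]
        exact Finsupp.sum_zero_index

/-- the induced map on the bi-free algebra -/
noncomputable def ϑ'' (g : ℕ) : BiFreeAlgebra k g →ₐ[k] MonoidAlgebra k (P g) :=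
  RingQuot.liftAlgHom k ⟨θt k g, θt_rel k⟩

lemma ϑ''_mk (g : ℕ) (x : FreeAlgebra k (BFVar g)) :
    ϑ'' k g (RingQuot.mkAlgHom k (BFRel k g) x) = θt k g x :=
  RingQuot.liftAlgHom_mkAlgHom_apply _ _ _ _

lemma ϑ''_injective (g : ℕ) : Function.Injective (ϑ'' k g) := by
  rw [injective_iff_map_eq_zero]
  intro x hx
  obtain ⟨y, rfl⟩ := RingQuot.mkAlgHom_surjective k (BFRel k g) x
  rw [ϑ''_mk, θt_eq] at hx
  simp only [AlgHom.coe_comp, AlgEquiv.toAlgHom_eq_coe, AlgHom.coe_coe, Function.comp_apply,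
    MonoidAlgebra.mapDomainAlgHom_apply] at hx
  have := ker_lemma k g (FreeAlgebra.equivMonoidAlgebraFreeMonoid (R := k) (X := BFVar g) y) hx
  rwa [AlgEquiv.symm_apply_apply] at this

/-! ### The multipartite side -/

def ιQ : MPVar g → P g
  | .inl i => (FreeMonoid.of i, 1, 1)
  | .inr (.inl (i, b)) => (1, dmid i b, 1)
  | .inr (.inr i) => (1, 1, FreeMonoid.of i)

lemma ιQ_comm {v w : MPVar g} (h : mpPart v ≠ mpPart w) : ιQ v * ιQ w = ιQ w * ιQ v := by
  rcases v with i | ⟨i, b⟩ | i <;> rcases w with j | ⟨j, b'⟩ | j <;>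
    simp only [ιQ, Prod.mk_mul_mk, one_mul, mul_one] <;>
    first
      | rfl
      | (exact absurd rfl h)
      | (refine Prod.ext rfl (Prod.ext ?_ rfl)
         exact dmid_comm _ _ (fun hij => h (by rw [mpPart, mpPart, hij])))

noncomputable def ΨA (g : ℕ) : FreeAlgebra k (MPVar g) →ₐ[k] MonoidAlgebra k (P g) :=
  FreeAlgebra.lift k (fun w => MonoidAlgebra.of k (P g) (ιQ w))

lemma ΨA_rel {g : ℕ} : ∀ ⦃x y : FreeAlgebra k (MPVar g)⦄, MPRel k g x y → ΨA k g x = ΨA k g y := by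
  rintro _ _ ⟨v, w, h⟩
  simp only [map_mul, ΨA, FreeAlgebra.lift_ι_apply]
  rw [← map_mul, ← map_mul, ιQ_comm h]

noncomputable def Ψ (g : ℕ) : MPAlgebra k g →ₐ[k] MonoidAlgebra k (P g) :=
  RingQuot.liftAlgHom k ⟨ΨA k g, ΨA_rel k⟩

lemma Ψ_gen (g : ℕ) (w : MPVar g) :
    Ψ k g (mpGen k g w) = MonoidAlgebra.of k (P g) (ιQ w) := by
  rw [mpGen, Ψ, RingQuot.liftAlgHom_mkAlgHom_apply, ΨA, FreeAlgebra.lift_ι_apply]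

/-- commuting generators in the multipartite algebra -/
lemma mp_comm {v w : MPVar g} (h : mpPart v ≠ mpPart w) :
    Commute (mpGen k g v) (mpGen k g w) := by
  have := RingQuot.mkAlgHom_rel k (MPRel.comm (k := k) v w h)
  simp only [map_mul] at this
  exact this

/-- the images of the generators under `ϑ` -/
noncomputable def ΘA (g : ℕ) : FreeAlgebra k (BFVar g) →ₐ[k] MPAlgebra k g :=
  FreeAlgebra.lift k (fun v => match v with
    | .inl i => mpGen k g (.inl i) * mpGen k g (.inr (.inl (i, false)))
    | .inr i => mpGen k g (.inr (.inr i)) * mpGen k g (.inr (.inl (i, true))))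

lemma ΘA_rel {g : ℕ} : ∀ ⦃x y : FreeAlgebra k (BFVar g)⦄, BFRel k g x y → ΘA k g x = ΘA k g y := by
  rintro _ _ ⟨i, j, h⟩
  simp only [map_mul, ΘA, FreeAlgebra.lift_ι_apply]
  have hac : Commute (mpGen k g (.inl i)) (mpGen k g (.inr (.inr j))) :=
    mp_comm k (by simp [mpPart])
  have had : Commute (mpGen k g (.inl i)) (mpGen k g (.inr (.inl (j, true)))) :=
    mp_comm k (by simp [mpPart])
  have hbc : Commute (mpGen k g (.inr (.inl (i, false)))) (mpGen k g (.inr (.inr j))) :=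
    mp_comm k (by simp [mpPart])
  have hbd : Commute (mpGen k g (.inr (.inl (i, false)))) (mpGen k g (.inr (.inl (j, true)))) :=
    mp_comm k (by simp [mpPart, h])
  exact ((hac.mul_right had).mul_left (hbc.mul_right hbd)).eq

noncomputable def ϑfin (g : ℕ) : BiFreeAlgebra k g →ₐ[k] MPAlgebra k g :=
  RingQuot.liftAlgHom k ⟨ΘA k g, ΘA_rel k⟩

lemma ϑfin_gen_l (g : ℕ) (i : Fin g) :
    ϑfin k g (bfGen k g (.inl i)) =
      mpGen k g (.inl i) * mpGen k g (.inr (.inl (i, false))) := by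
  rw [bfGen, ϑfin, RingQuot.liftAlgHom_mkAlgHom_apply, ΘA, FreeAlgebra.lift_ι_apply]

lemma ϑfin_gen_r (g : ℕ) (i : Fin g) :
    ϑfin k g (bfGen k g (.inr i)) =
      mpGen k g (.inr (.inr i)) * mpGen k g (.inr (.inl (i, true))) := by
  rw [bfGen, ϑfin, RingQuot.liftAlgHom_mkAlgHom_apply, ΘA, FreeAlgebra.lift_ι_apply]

lemma comp_eq (g : ℕ) : (Ψ k g).comp (ϑfin k g) = ϑ'' k g := by
  apply RingQuot.ringQuot_ext'
  apply FreeAlgebra.hom_ext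
  funext v
  simp only [Function.comp_apply, AlgHom.coe_comp]
  have hmk : RingQuot.mkAlgHom k (BFRel k g) (FreeAlgebra.ι k v) = bfGen k g v := rfl
  have hθ : ϑ'' k g (bfGen k g v) = MonoidAlgebra.of k (P g) (ιP v) := by
    rw [bfGen, ϑ''_mk, θt, FreeAlgebra.lift_ι_apply]
  rw [hmk, hθ]
  match v with
  | .inl i =>
    rw [ϑfin_gen_l, map_mul, Ψ_gen, Ψ_gen, ← map_mul]
    congr 1
  | .inr i =>
    rw [ϑfin_gen_r, map_mul, Ψ_gen, Ψ_gen, ← map_mul]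
    congr 1

lemma ϑfin_injective (g : ℕ) : Function.Injective (ϑfin k g) := by
  have h : ∀ x, Ψ k g (ϑfin k g x) = ϑ'' k g x := fun x => by
    rw [← comp_eq k g]; rfl
  intro x y hxy
  apply ϑ''_injective k g
  rw [← h, ← h, hxy]

end BFP

/-- Appendix A. The assignment `X_i ↦ X'_i X''_i`, `Y_i ↦ Y'_i Y''_i`
induces a well-defined `k`-algebra homomorphism `ϑ` from the bi-free algebra `B` to the
multipartite free algebra `A` with `g + 2` parts, and `ϑ` is injective. -/
theorem bifree_embeds_into_multipartite {k : Type*} [Field k] [CharZero k] (g : ℕ) :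
    ∃ ϑ : BiFreeAlgebra k g →ₐ[k] MPAlgebra k g,
      (∀ i : Fin g, ϑ (bfGen k g (Sum.inl i)) =
        mpGen k g (Sum.inl i) * mpGen k g (Sum.inr (Sum.inl (i, false)))) ∧
      (∀ i : Fin g, ϑ (bfGen k g (Sum.inr i)) =
        mpGen k g (Sum.inr (Sum.inr i)) * mpGen k g (Sum.inr (Sum.inl (i, true)))) ∧
      Function.Injective ϑ :=
  ⟨BFP.ϑfin k g, BFP.ϑfin_gen_l k g, BFP.ϑfin_gen_r k g, BFP.ϑfin_injective k g⟩
end
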